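/- arXiv:2406.04211 — 3 statements merged into one kernel-verified Lean document; each statement's English description precedes it below -/
import Mathlib

section
/- Let D be the derivation on ℚ[x,y,z] with D(x) = D(y) = D(z) = xyz. Then for all n ≥ 1, D^n(x) equals the trivariate second-order Eulerian polynomial C_n(x,y,z) = Σ_{σ ∈ Q_n} x^{asc(σ)} y^{plat(σ)} z^{des(σ)}. -/
/-- A Stirling permutation of the multiset {1,1,2,2,...,n,n}. -/
def IsStirling (n : ℕ) (σ : List ℕ) : Prop :=
  (∀ m : ℕ, σ.count m = if 1 ≤ m ∧ m ≤ n then 2 else 0) ∧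
  (∀ i s j : ℕ, i < s → s < j → j < σ.length →
    σ.getD i 0 = σ.getD j 0 → σ.getD i 0 < σ.getD s 0)

/-- Entry of `σ` in 1-based indexing, with the boundary convention
`σ_0 = 0` and `σ_i = 0` for `i > length σ`. -/
def ent (σ : List ℕ) (i : ℕ) : ℕ := if i = 0 then 0 else σ.getD (i - 1) 0

/-- Number of ascents: indices `1 ≤ i ≤ 2n` with `σ_{i-1} < σ_i`. -/
def ascQ (σ : List ℕ) : ℕ :=
  ((Finset.Icc 1 σ.length).filter fun i => ent σ (i - 1) < ent σ i).card

/-- Number of plateaux: indices `1 ≤ i ≤ 2n-1` with `σ_i = σ_{i+1}`. -/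
def platQ (σ : List ℕ) : ℕ :=
  ((Finset.Icc 1 (σ.length - 1)).filter fun i => ent σ i = ent σ (i + 1)).card

/-- Number of descents: indices `1 ≤ i ≤ 2n` with `σ_i > σ_{i+1}` (with `σ_{2n+1} = 0`). -/
def desQ (σ : List ℕ) : ℕ :=
  ((Finset.Icc 1 σ.length).filter fun i => ent σ (i + 1) < ent σ i).card


open MvPolynomial

/-- The trivariate second-order Eulerian polynomial
`C_n(x,y,z) = Σ_{σ ∈ Q_n} x^{asc σ} y^{plat σ} z^{des σ}`, with variables
`x = X 0`, `y = X 1`, `z = X 2`. -/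
noncomputable def Cpoly (n : ℕ) : MvPolynomial (Fin 3) ℚ :=
  ∑ᶠ σ ∈ {σ : List ℕ | IsStirling n σ},
    (X 0 : MvPolynomial (Fin 3) ℚ) ^ ascQ σ * X 1 ^ platQ σ * X 2 ^ desQ σ

namespace StirAux
open Finset

def ins (σ : List ℕ) (j v : ℕ) : List ℕ := σ.take j ++ v :: v :: σ.drop j

lemma length_ins (σ : List ℕ) (j v : ℕ) (hj : j ≤ σ.length) :
    (ins σ j v).length = σ.length + 2 := by
  simp [ins]; omega

lemma count_ins (σ : List ℕ) (j v m : ℕ) :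
    (ins σ j v).count m = σ.count m + if v = m then 2 else 0 := by
  have h : (σ.take j).count m + (σ.drop j).count m = σ.count m := by
    rw [← List.count_append, List.take_append_drop]
  simp [ins, List.count_append, List.count_cons]
  split_ifs <;> omega

lemma getD_ins (σ : List ℕ) (j v : ℕ) (hj : j ≤ σ.length) (m : ℕ) :
    (ins σ j v).getD m 0 =
      if m < j then σ.getD m 0 else if m < j + 2 then v else σ.getD (m - 2) 0 := by
  have hlt : (σ.take j).length = j := by simp [hj]
  rcases Nat.lt_or_ge m j with h | h
  · rw [if_pos h, ins, List.getD_append _ _ _ _ (by omega)]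
    rcases Nat.lt_or_ge m σ.length with h2 | h2
    · rw [List.getD_eq_getElem _ _ (by simp; omega), List.getD_eq_getElem _ _ h2]
      simp [List.getElem_take]
    · omega
  · rw [if_neg (by omega), ins, List.getD_append_right _ _ _ _ (by omega), hlt]
    rcases Nat.lt_or_ge m (j+2) with h2 | h2
    · rw [if_pos h2]
      have : m - j = 0 ∨ m - j = 1 := by omega
      rcases this with h3 | h3 <;> simp [h3]
    · rw [if_neg (by omega)]
      have : m - j = (m - j - 2) + 2 := by omega
      rw [this]
      simp only [List.getD_cons_succ]
      rcases Nat.lt_or_ge (m - 2) σ.length with h3 | h3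
      · rw [List.getD_eq_getElem _ _ (by simp; omega), List.getD_eq_getElem _ _ h3,
          List.getElem_drop]
        congr 1; omega
      · rw [List.getD_eq_default _ _ (by simp; omega), List.getD_eq_default _ _ h3]

lemma ent_ins (σ : List ℕ) (j v : ℕ) (hj : j ≤ σ.length) (i : ℕ) :
    ent (ins σ j v) i =
      if i ≤ j then ent σ i else if i ≤ j + 2 then v else ent σ (i - 2) := by
  rcases Nat.eq_zero_or_pos i with rfl | hi
  · simp [ent]
  · rw [ent, if_neg (by omega), getD_ins σ j v hj]
    rcases Nat.lt_or_ge (i-1) j with h | h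
    · rw [if_pos h, if_pos (by omega), ent, if_neg (by omega)]
    · rw [if_neg (by omega)]
      rcases Nat.lt_or_ge (i-1) (j+2) with h2 | h2
      · have h3 : ¬ i ≤ j := by omega
        have h4 : i ≤ j + 2 := by omega
        simp [h2, h3, h4]
      · have h3 : ¬ (i - 1 < j) := by omega
        have h4 : ¬ (i - 1 < j + 2) := by omega
        have h5 : ¬ i ≤ j := by omega
        have h6 : ¬ i ≤ j + 2 := by omega
        rw [if_neg h4, if_neg h5, if_neg h6, ent, if_neg (show ¬ (i-2) = 0 by omega)]
        congr 1
lemma stir_mem {n : ℕ} {σ : List ℕ} (h : IsStirling n σ) {x : ℕ} (hx : x ∈ σ) :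
    1 ≤ x ∧ x ≤ n := by
  by_contra hc
  have : σ.count x = 0 := by rw [h.1 x, if_neg (by omega)]
  exact (List.count_pos_iff.2 hx).ne' this

lemma stir_length {n : ℕ} {σ : List ℕ} (h : IsStirling n σ) : σ.length = 2 * n := by
  have h1 : σ.toFinset ⊆ Finset.Icc 1 n := by
    intro x hx
    rw [List.mem_toFinset] at hx
    exact Finset.mem_Icc.2 (stir_mem h hx)
  have h2 : ∑ a ∈ Finset.Icc 1 n, σ.count a = σ.length := by
    have h3 := Multiset.toFinset_sum_count_eq (σ : Multiset ℕ)
    simp only [List.toFinset_coe, Multiset.coe_count, Multiset.coe_card] at h3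
    rw [← h3]
    exact (Finset.sum_subset h1 (fun x _ hx => by
      rw [List.count_eq_zero]; simpa using hx)).symm
  rw [← h2]
  have : ∀ a ∈ Finset.Icc 1 n, σ.count a = 2 := fun a ha => by
    rw [h.1 a, if_pos (Finset.mem_Icc.1 ha)]
  rw [Finset.sum_congr rfl this, Finset.sum_const, Nat.card_Icc]
  simp [Nat.mul_comm]

lemma stir_getD_le {n : ℕ} {σ : List ℕ} (h : IsStirling n σ) (i : ℕ) :
    σ.getD i 0 ≤ n := by
  rcases Nat.lt_or_ge i σ.length with h1 | h1
  · rw [List.getD_eq_getElem _ _ h1]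
    exact (stir_mem h (σ.getElem_mem h1)).2
  · rw [List.getD_eq_default _ _ h1]; omega

lemma stir_ent_le {n : ℕ} {σ : List ℕ} (h : IsStirling n σ) (i : ℕ) : ent σ i ≤ n := by
  rw [ent]; split_ifs; · omega
  · exact stir_getD_le h _

lemma stir_ent_pos {n : ℕ} {σ : List ℕ} (h : IsStirling n σ) {i : ℕ}
    (h1 : 1 ≤ i) (h2 : i ≤ σ.length) : 1 ≤ ent σ i := by
  rw [ent, if_neg (by omega), List.getD_eq_getElem _ _ (by omega)]
  exact (stir_mem h (σ.getElem_mem _)).1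

/-- gap set for a relation `R`: positions `k ∈ [0, length]` with `R (ent k) (ent (k+1))`. -/
def gapF (R : ℕ → ℕ → Prop) [DecidableRel R] (σ : List ℕ) : Finset ℕ :=
  (Finset.range (σ.length + 1)).filter fun k => R (ent σ k) (ent σ (k + 1))

def gA (σ : List ℕ) : Finset ℕ := gapF (· < ·) σ
def gP (σ : List ℕ) : Finset ℕ := gapF (· = ·) σ
def gD (σ : List ℕ) : Finset ℕ := gapF (fun a b => b < a) σ
lemma ent_eq_zero {σ : List ℕ} {m : ℕ} (h : σ.length + 1 ≤ m) : ent σ m = 0 := by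
  rw [ent, if_neg (by omega)]
  exact List.getD_eq_default _ _ (by omega)

lemma ascQ_eq (σ : List ℕ) : ascQ σ = (gA σ).card := by
  rw [ascQ, gA, gapF]
  rw [show ((Finset.range (σ.length + 1)).filter fun k => ent σ k < ent σ (k + 1))
      = ((Finset.Icc 1 σ.length).filter fun i => ent σ (i - 1) < ent σ i).image (· - 1) from ?_]
  · rw [Finset.card_image_of_injOn]
    intro a ha b hb hab
    simp only [Finset.coe_filter, Finset.mem_Icc, Set.mem_setOf_eq] at ha hb
    have hab' : a - 1 = b - 1 := hab
    omega
  · ext k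
    simp only [Finset.mem_filter, Finset.mem_range, Finset.mem_image, Finset.mem_Icc]
    constructor
    · rintro ⟨hk, hlt⟩
      refine ⟨k + 1, ⟨⟨by omega, ?_⟩, by simpa using hlt⟩, by omega⟩
      by_contra hc
      rw [ent_eq_zero (m := k + 1) (by omega)] at hlt
      omega
    · rintro ⟨i, ⟨⟨h1, h2⟩, h3⟩, rfl⟩
      exact ⟨by omega, by
        have : i - 1 + 1 = i := by omega
        rw [this]; exact h3⟩

lemma desQ_eq (σ : List ℕ) : desQ σ = (gD σ).card := by
  rw [desQ, gD, gapF]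
  congr 1
  ext k
  simp only [Finset.mem_filter, Finset.mem_range, Finset.mem_Icc]
  constructor
  · rintro ⟨⟨h1, h2⟩, h3⟩; exact ⟨by omega, h3⟩
  · rintro ⟨h1, h2⟩
    refine ⟨⟨?_, by omega⟩, h2⟩
    rcases Nat.eq_zero_or_pos k with rfl | h; · simp [ent] at h2
    · omega

lemma platQ_eq {n : ℕ} {σ : List ℕ} (h : IsStirling n σ) (hn : 1 ≤ n) :
    platQ σ = (gP σ).card := by
  have hL : σ.length = 2 * n := stir_length h
  rw [platQ, gP, gapF]
  congr 1
  ext k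
  simp only [Finset.mem_filter, Finset.mem_range, Finset.mem_Icc]
  constructor
  · rintro ⟨⟨h1, h2⟩, h3⟩; exact ⟨by omega, h3⟩
  · rintro ⟨h1, h2⟩
    rcases Nat.eq_zero_or_pos k with rfl | hk
    · have := stir_ent_pos h (le_refl 1) (by omega)
      rw [show ent σ 0 = 0 from by simp [ent], show (0:ℕ) + 1 = 1 from rfl] at h2
      omega
    · rcases Nat.lt_or_ge k σ.length with h4 | h4
      · exact ⟨⟨by omega, by omega⟩, h2⟩
      · have h5 : k = σ.length := by omega
        have := stir_ent_pos h (i := k) (by omega) (by omega)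
        rw [ent_eq_zero (m := k + 1) (by omega)] at h2
        omega
lemma gapF_ins (R : ℕ → ℕ → Prop) [DecidableRel R] {σ : List ℕ} {j v d : ℕ}
    (hj : j ≤ σ.length) (hd1 : j ≤ d) (hd2 : d ≤ j + 2)
    (h1 : R (ent σ j) v ↔ d = j) (h2 : R v v ↔ d = j + 1)
    (h3 : R v (ent σ (j + 1)) ↔ d = j + 2) :
    gapF R (ins σ j v) =
      insert d (((gapF R σ).erase j).image fun k => if k < j then k else k + 2) := by
  have hlen := length_ins σ j v hj
  have E := ent_ins σ j v hj
  ext k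
  simp only [gapF, Finset.mem_insert, Finset.mem_image, Finset.mem_erase, Finset.mem_filter,
    Finset.mem_range, hlen]
  constructor
  · rintro ⟨hk, hR⟩
    rcases Nat.lt_or_ge k j with hkj | hkj
    · right
      refine ⟨k, ⟨by omega, by omega, ?_⟩, if_pos hkj⟩
      rwa [E k, if_pos (by omega), E (k + 1), if_pos (by omega)] at hR
    · rcases Nat.lt_or_ge k (j + 3) with hk3 | hk3
      · have hcase : k = j ∨ k = j + 1 ∨ k = j + 2 := by omega
        left
        rcases hcase with rfl | rfl | rfl
        · rw [E k, if_pos le_rfl, E (k + 1), if_neg (by omega), if_pos (by omega)] at hR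
          exact (h1.1 hR).symm
        · rw [E (j + 1), if_neg (by omega), if_pos (by omega), E (j + 1 + 1), if_neg (by omega),
            if_pos (by omega)] at hR
          exact (h2.1 hR).symm
        · rw [E (j + 2), if_neg (by omega), if_pos (by omega), E (j + 2 + 1), if_neg (by omega),
            if_neg (by omega)] at hR
          rw [show j + 2 + 1 - 2 = j + 1 by omega] at hR
          exact (h3.1 hR).symm
      · right
        refine ⟨k - 2, ⟨by omega, by omega, ?_⟩, by rw [if_neg (by omega)]; omega⟩
        rw [E k, if_neg (by omega), if_neg (by omega), E (k + 1), if_neg (by omega),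
          if_neg (by omega), show k + 1 - 2 = k - 2 + 1 by omega] at hR
        exact hR
  · rintro (rfl | ⟨x, ⟨hxj, hx, hRx⟩, rfl⟩)
    · refine ⟨by omega, ?_⟩
      have hcase : k = j ∨ k = j + 1 ∨ k = j + 2 := by omega
      rcases hcase with rfl | rfl | rfl
      · rw [E k, if_pos le_rfl, E (k + 1), if_neg (by omega), if_pos (by omega)]
        exact h1.2 rfl
      · rw [E (j + 1), if_neg (by omega), if_pos (by omega), E (j + 1 + 1), if_neg (by omega),
          if_pos (by omega)]
        exact h2.2 rfl
      · rw [E (j + 2), if_neg (by omega), if_pos (by omega), E (j + 2 + 1), if_neg (by omega),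
          if_neg (by omega), show j + 2 + 1 - 2 = j + 1 by omega]
        exact h3.2 rfl
    · rcases Nat.lt_or_ge x j with hxlt | hxge
      · rw [if_pos hxlt]
        refine ⟨by omega, ?_⟩
        rwa [E x, if_pos (by omega), E (x + 1), if_pos (by omega)]
      · rw [if_neg (by omega)]
        refine ⟨by omega, ?_⟩
        rw [E (x + 2), if_neg (by omega), if_neg (by omega), show x + 2 - 2 = x by omega,
          E (x + 2 + 1), if_neg (by omega), if_neg (by omega), show x + 2 + 1 - 2 = x + 1 by omega]
        exact hRx

lemma card_gapF_ins (R : ℕ → ℕ → Prop) [DecidableRel R] {σ : List ℕ} {j v d : ℕ}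
    (hj : j ≤ σ.length) (hd1 : j ≤ d) (hd2 : d ≤ j + 2)
    (h1 : R (ent σ j) v ↔ d = j) (h2 : R v v ↔ d = j + 1)
    (h3 : R v (ent σ (j + 1)) ↔ d = j + 2) :
    (gapF R (ins σ j v)).card = ((gapF R σ).erase j).card + 1 := by
  rw [gapF_ins R hj hd1 hd2 h1 h2 h3, Finset.card_insert_of_notMem, Finset.card_image_of_injOn]
  · intro a _ b _ hab
    simp only at hab
    split_ifs at hab <;> omega
  · simp only [Finset.mem_image, Finset.mem_erase, not_exists]
    rintro x ⟨⟨hxj, _⟩, hfx⟩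
    split_ifs at hfx <;> omega
lemma stir_ins {n : ℕ} {σ : List ℕ} (h : IsStirling n σ) {j : ℕ} (hj : j ≤ σ.length) :
    IsStirling (n + 1) (ins σ j (n + 1)) := by
  have G := getD_ins σ j (n + 1) hj
  have Li := stir_getD_le h
  constructor
  · intro m
    rw [count_ins, h.1 m]
    split_ifs <;> omega
  · intro i s k his hsk hk hval
    rw [length_ins _ _ _ hj] at hk
    rw [G i, G k] at hval
    rw [G i, G s]
    by_cases hiM : j ≤ i ∧ i < j + 2
    · rw [if_neg (by omega), if_pos (by omega)] at hval ⊢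
      by_cases hkM : j ≤ k ∧ k < j + 2
      · omega
      · exfalso
        split_ifs at hval with h1 h2
        · have := Li k; omega
        · omega
        · have := Li (k - 2); omega
    · have fi : (if i < j then σ.getD i 0 else if i < j + 2 then (n + 1) else σ.getD (i - 2) 0)
          = σ.getD (if i < j then i else i - 2) 0 := by
        split_ifs with h1 h2
        · rfl
        · exact absurd ⟨by omega, by omega⟩ hiM
        · rfl
      by_cases hkM : j ≤ k ∧ k < j + 2
      · exfalso
        rw [fi, if_neg (show ¬ k < j by omega), if_pos (show k < j + 2 by omega)] at hval
        have := Li (if i < j then i else i - 2); omega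
      · have fk : (if k < j then σ.getD k 0 else if k < j + 2 then (n + 1) else σ.getD (k - 2) 0)
            = σ.getD (if k < j then k else k - 2) 0 := by
          split_ifs with h1 h2
          · rfl
          · exact absurd ⟨by omega, by omega⟩ hkM
          · rfl
        rw [fi, fk] at hval
        by_cases hsM : j ≤ s ∧ s < j + 2
        · rw [fi, if_neg (show ¬ s < j by omega), if_pos (show s < j + 2 by omega)]
          have := Li (if i < j then i else i - 2); omega
        · have fs : (if s < j then σ.getD s 0 else if s < j + 2 then (n + 1) else σ.getD (s - 2) 0)
              = σ.getD (if s < j then s else s - 2) 0 := by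
            split_ifs with h1 h2
            · rfl
            · exact absurd ⟨by omega, by omega⟩ hsM
            · rfl
          rw [fi, fs]
          exact h.2 _ _ _ (by split_ifs <;> omega) (by split_ifs <;> omega)
            (by split_ifs <;> omega) hval
open MvPolynomial in
noncomputable def mono (σ : List ℕ) : MvPolynomial (Fin 3) ℚ :=
  (X 0 : MvPolynomial (Fin 3) ℚ) ^ ascQ σ * X 1 ^ platQ σ * X 2 ^ desQ σ

lemma card_gA_ins {n : ℕ} {σ : List ℕ} (h : IsStirling n σ) {j : ℕ} (hj : j ≤ σ.length) :
    (gA (ins σ j (n + 1))).card = ((gA σ).erase j).card + 1 :=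
  card_gapF_ins (· < ·) (v := n + 1) (d := j) hj le_rfl (by omega)
    (iff_of_true (by have := stir_ent_le h j; omega) rfl)
    (iff_of_false (lt_irrefl _) (by omega))
    (iff_of_false (by have := stir_ent_le h (j + 1); omega) (by omega))

lemma card_gP_ins {n : ℕ} {σ : List ℕ} (h : IsStirling n σ) {j : ℕ} (hj : j ≤ σ.length) :
    (gP (ins σ j (n + 1))).card = ((gP σ).erase j).card + 1 :=
  card_gapF_ins (· = ·) (v := n + 1) (d := j + 1) hj (by omega) (by omega)
    (iff_of_false (by have := stir_ent_le h j; omega) (by omega))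
    (iff_of_true rfl rfl)
    (iff_of_false (by have := stir_ent_le h (j + 1); omega) (by omega))

lemma card_gD_ins {n : ℕ} {σ : List ℕ} (h : IsStirling n σ) {j : ℕ} (hj : j ≤ σ.length) :
    (gD (ins σ j (n + 1))).card = ((gD σ).erase j).card + 1 :=
  card_gapF_ins (fun a b => b < a) (v := n + 1) (d := j + 2) hj (by omega) le_rfl
    (iff_of_false (by have := stir_ent_le h j; omega) (by omega))
    (iff_of_false (lt_irrefl _) (by omega))
    (iff_of_true (by have := stir_ent_le h (j + 1); omega) rfl)

open MvPolynomial in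
lemma mono_ins_gA {n : ℕ} {σ : List ℕ} (h : IsStirling n σ) (hn : 1 ≤ n) {j : ℕ}
    (hjA : j ∈ gA σ) :
    mono (ins σ j (n + 1)) =
      (X 0 : MvPolynomial (Fin 3) ℚ) ^ ascQ σ * X 1 ^ (platQ σ + 1) * X 2 ^ (desQ σ + 1) := by
  have hj : j ≤ σ.length := by
    have := Finset.mem_range.1 (Finset.mem_filter.1 hjA).1; omega
  have h' := stir_ins h hj
  have hjP : j ∉ gP σ := by
    intro hc
    have h1 := (Finset.mem_filter.1 hjA).2
    have h2 := (Finset.mem_filter.1 hc).2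
    simp only at h1 h2; omega
  have hjD : j ∉ gD σ := by
    intro hc
    have h1 := (Finset.mem_filter.1 hjA).2
    have h2 := (Finset.mem_filter.1 hc).2
    simp only at h1 h2; omega
  have hcard : 1 ≤ (gA σ).card := Finset.card_pos.2 ⟨j, hjA⟩
  rw [mono, ascQ_eq, platQ_eq h' (by omega), desQ_eq, card_gA_ins h hj, card_gP_ins h hj,
    card_gD_ins h hj, Finset.card_erase_of_mem hjA, Finset.erase_eq_of_notMem hjP,
    Finset.erase_eq_of_notMem hjD, ascQ_eq σ, platQ_eq h hn, desQ_eq σ]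
  rw [Nat.sub_add_cancel hcard]

open MvPolynomial in
lemma mono_ins_gP {n : ℕ} {σ : List ℕ} (h : IsStirling n σ) (hn : 1 ≤ n) {j : ℕ}
    (hjP : j ∈ gP σ) :
    mono (ins σ j (n + 1)) =
      (X 0 : MvPolynomial (Fin 3) ℚ) ^ (ascQ σ + 1) * X 1 ^ platQ σ * X 2 ^ (desQ σ + 1) := by
  have hj : j ≤ σ.length := by
    have := Finset.mem_range.1 (Finset.mem_filter.1 hjP).1; omega
  have h' := stir_ins h hj
  have hjA : j ∉ gA σ := by
    intro hc
    have h1 := (Finset.mem_filter.1 hjP).2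
    have h2 := (Finset.mem_filter.1 hc).2
    simp only at h1 h2; omega
  have hjD : j ∉ gD σ := by
    intro hc
    have h1 := (Finset.mem_filter.1 hjP).2
    have h2 := (Finset.mem_filter.1 hc).2
    simp only at h1 h2; omega
  have hcard : 1 ≤ (gP σ).card := Finset.card_pos.2 ⟨j, hjP⟩
  rw [mono, ascQ_eq, platQ_eq h' (by omega), desQ_eq, card_gA_ins h hj, card_gP_ins h hj,
    card_gD_ins h hj, Finset.card_erase_of_mem hjP, Finset.erase_eq_of_notMem hjA,
    Finset.erase_eq_of_notMem hjD, ascQ_eq σ, platQ_eq h hn, desQ_eq σ]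
  rw [Nat.sub_add_cancel hcard]

open MvPolynomial in
lemma mono_ins_gD {n : ℕ} {σ : List ℕ} (h : IsStirling n σ) (hn : 1 ≤ n) {j : ℕ}
    (hjD : j ∈ gD σ) :
    mono (ins σ j (n + 1)) =
      (X 0 : MvPolynomial (Fin 3) ℚ) ^ (ascQ σ + 1) * X 1 ^ (platQ σ + 1) * X 2 ^ desQ σ := by
  have hj : j ≤ σ.length := by
    have := Finset.mem_range.1 (Finset.mem_filter.1 hjD).1; omega
  have h' := stir_ins h hj
  have hjA : j ∉ gA σ := by
    intro hc
    have h1 := (Finset.mem_filter.1 hjD).2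
    have h2 := (Finset.mem_filter.1 hc).2
    simp only at h1 h2; omega
  have hjP : j ∉ gP σ := by
    intro hc
    have h1 := (Finset.mem_filter.1 hjD).2
    have h2 := (Finset.mem_filter.1 hc).2
    simp only at h1 h2; omega
  have hcard : 1 ≤ (gD σ).card := Finset.card_pos.2 ⟨j, hjD⟩
  rw [mono, ascQ_eq, platQ_eq h' (by omega), desQ_eq, card_gA_ins h hj, card_gP_ins h hj,
    card_gD_ins h hj, Finset.card_erase_of_mem hjD, Finset.erase_eq_of_notMem hjA,
    Finset.erase_eq_of_notMem hjP, ascQ_eq σ, platQ_eq h hn, desQ_eq σ]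
  rw [Nat.sub_add_cancel hcard]

lemma sum_range_split {M : Type*} [AddCommMonoid M] (σ : List ℕ) (f : ℕ → M) :
    ∑ j ∈ Finset.range (σ.length + 1), f j =
      ∑ j ∈ gA σ, f j + ∑ j ∈ gP σ, f j + ∑ j ∈ gD σ, f j := by
  classical
  rw [← Finset.sum_filter_add_sum_filter_not (Finset.range (σ.length + 1))
    (fun k => ent σ k < ent σ (k + 1)) f]
  rw [← Finset.sum_filter_add_sum_filter_not ((Finset.range (σ.length + 1)).filter
    (fun k => ¬ ent σ k < ent σ (k + 1))) (fun k => ent σ k = ent σ (k + 1)) f]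
  rw [Finset.filter_filter, Finset.filter_filter]
  have hP : ((Finset.range (σ.length + 1)).filter
      fun k => ¬ ent σ k < ent σ (k + 1) ∧ ent σ k = ent σ (k + 1)) = gP σ := by
    apply Finset.filter_congr
    intro x _
    simp only [decide_eq_true_eq]
    omega
  have hD : ((Finset.range (σ.length + 1)).filter
      fun k => ¬ ent σ k < ent σ (k + 1) ∧ ¬ ent σ k = ent σ (k + 1)) = gD σ := by
    apply Finset.filter_congr
    intro x _
    simp only [decide_eq_true_eq]
    omega
  rw [hP, hD, gA, gapF, add_assoc]
open MvPolynomial in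
lemma D_mono (D : Derivation ℚ (MvPolynomial (Fin 3) ℚ) (MvPolynomial (Fin 3) ℚ))
    (hD : ∀ i : Fin 3, D (X i) = X 0 * X 1 * X 2) (a b c : ℕ) :
    D ((X 0 : MvPolynomial (Fin 3) ℚ) ^ a * X 1 ^ b * X 2 ^ c) =
      (a : MvPolynomial (Fin 3) ℚ) * (X 0 ^ a * X 1 ^ (b + 1) * X 2 ^ (c + 1)) +
      (b : MvPolynomial (Fin 3) ℚ) * (X 0 ^ (a + 1) * X 1 ^ b * X 2 ^ (c + 1)) +
      (c : MvPolynomial (Fin 3) ℚ) * (X 0 ^ (a + 1) * X 1 ^ (b + 1) * X 2 ^ c) := by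
  have La : (a : MvPolynomial (Fin 3) ℚ) * (X 0 ^ (a - 1) * (X 0 * X 1 * X 2) * (X 1 ^ b * X 2 ^ c))
      = (a : MvPolynomial (Fin 3) ℚ) * (X 0 ^ a * X 1 ^ (b + 1) * X 2 ^ (c + 1)) := by
    cases a with
    | zero => simp
    | succ m => rw [Nat.succ_sub_one]; ring
  have Lb : (b : MvPolynomial (Fin 3) ℚ) * (X 1 ^ (b - 1) * (X 0 * X 1 * X 2) * (X 0 ^ a * X 2 ^ c))
      = (b : MvPolynomial (Fin 3) ℚ) * (X 0 ^ (a + 1) * X 1 ^ b * X 2 ^ (c + 1)) := by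
    cases b with
    | zero => simp
    | succ m => rw [Nat.succ_sub_one]; ring
  have Lc : (c : MvPolynomial (Fin 3) ℚ) * (X 2 ^ (c - 1) * (X 0 * X 1 * X 2) * (X 0 ^ a * X 1 ^ b))
      = (c : MvPolynomial (Fin 3) ℚ) * (X 0 ^ (a + 1) * X 1 ^ (b + 1) * X 2 ^ c) := by
    cases c with
    | zero => simp
    | succ m => rw [Nat.succ_sub_one]; ring
  have e0 : D ((X 0 : MvPolynomial (Fin 3) ℚ) ^ a * X 1 ^ b * X 2 ^ c) =
      (a : MvPolynomial (Fin 3) ℚ) * (X 0 ^ (a - 1) * (X 0 * X 1 * X 2) * (X 1 ^ b * X 2 ^ c)) +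
      (b : MvPolynomial (Fin 3) ℚ) * (X 1 ^ (b - 1) * (X 0 * X 1 * X 2) * (X 0 ^ a * X 2 ^ c)) +
      (c : MvPolynomial (Fin 3) ℚ) * (X 2 ^ (c - 1) * (X 0 * X 1 * X 2) * (X 0 ^ a * X 1 ^ b)) := by
    rw [Derivation.leibniz, Derivation.leibniz, Derivation.leibniz_pow, Derivation.leibniz_pow,
      Derivation.leibniz_pow, hD 0, hD 1, hD 2]
    simp only [smul_eq_mul, nsmul_eq_mul]
    ring
  rw [e0, La, Lb, Lc]

open MvPolynomial in
lemma sum_ins_eq_D (D : Derivation ℚ (MvPolynomial (Fin 3) ℚ) (MvPolynomial (Fin 3) ℚ))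
    (hD : ∀ i : Fin 3, D (X i) = X 0 * X 1 * X 2) {n : ℕ} {σ : List ℕ}
    (h : IsStirling n σ) (hn : 1 ≤ n) :
    ∑ j ∈ Finset.range (2 * n + 1), mono (ins σ j (n + 1)) = D (mono σ) := by
  have hL : σ.length = 2 * n := stir_length h
  rw [show 2 * n + 1 = σ.length + 1 by omega]
  rw [sum_range_split σ (fun j => mono (ins σ j (n + 1)))]
  rw [Finset.sum_congr rfl (fun j hj => mono_ins_gA h hn hj),
    Finset.sum_congr rfl (fun j hj => mono_ins_gP h hn hj),
    Finset.sum_congr rfl (fun j hj => mono_ins_gD h hn hj),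
    Finset.sum_const, Finset.sum_const, Finset.sum_const]
  rw [mono, D_mono D hD, ← ascQ_eq, ← platQ_eq h hn, ← desQ_eq]
  simp only [nsmul_eq_mul]
lemma mem_split_first {v : ℕ} {l : List ℕ} (h : v ∈ l) :
    ∃ A B, l = A ++ v :: B ∧ v ∉ A := by
  induction l with
  | nil => simp at h
  | cons a t ih =>
    by_cases hav : a = v
    · exact ⟨[], t, by simp [hav], by simp⟩
    · have hvt : v ∈ t := by
        rcases List.mem_cons.1 h with h1 | h1
        · exact absurd h1.symm hav
        · exact h1
      rcases ih hvt with ⟨A, B, rfl, hA⟩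
      exact ⟨a :: A, B, rfl, by
        simp only [List.mem_cons, not_or]
        exact ⟨fun hc => hav hc.symm, hA⟩⟩

lemma stir_decomp {n : ℕ} {τ : List ℕ} (h : IsStirling (n + 1) τ) :
    ∃ A B, τ = A ++ (n + 1) :: (n + 1) :: B ∧ (n + 1) ∉ A ∧ (n + 1) ∉ B := by
  have hv : (n + 1) ∈ τ := by
    rw [← List.count_pos_iff]
    rw [h.1, if_pos (by omega)]
    omega
  rcases mem_split_first hv with ⟨A, B', rfl, hA⟩
  have hcount := h.1 (n + 1)
  rw [if_pos (by omega), List.count_append, List.count_cons,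
    List.count_eq_zero.2 hA] at hcount
  have hB' : B'.count (n + 1) = 1 := by simp at hcount; omega
  have hvB : (n + 1) ∈ B' := List.count_pos_iff.1 (by omega)
  rcases mem_split_first hvB with ⟨C, B, rfl, hC⟩
  have hCnil : C = [] := by
    by_contra hne
    have hClen : 1 ≤ C.length := by
      cases C
      · exact absurd rfl hne
      · simp
    set l := A ++ (n + 1) :: (C ++ (n + 1) :: B) with hl
    have g1 : l.getD A.length 0 = n + 1 := by
      rw [hl, List.getD_append_right _ _ _ _ le_rfl, Nat.sub_self, List.getD_cons_zero]
    have g2 : l.getD (A.length + 1 + C.length) 0 = n + 1 := by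
      rw [hl, List.getD_append_right _ _ _ _ (by omega),
        show A.length + 1 + C.length - A.length = C.length + 1 by omega, List.getD_cons_succ,
        List.getD_append_right _ _ _ _ le_rfl, Nat.sub_self, List.getD_cons_zero]
    have hlen : A.length + 1 + C.length < l.length := by
      rw [hl]; simp; omega
    have := h.2 A.length (A.length + 1) (A.length + 1 + C.length) (by omega) (by omega)
      hlen (by rw [g1, g2])
    rw [g1] at this
    have hle := stir_getD_le h (A.length + 1)
    omega
  subst hCnil
  refine ⟨A, B, by simp, hA, fun hB => ?_⟩
  have hB0 : B.count (n + 1) = 0 := by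
    simp [List.count_cons] at hB'
    omega
  exact (List.count_eq_zero.1 hB0) hB

def rem (v : ℕ) (τ : List ℕ) : List ℕ := τ.filter (fun x => x ≠ v)

def fi (v : ℕ) (τ : List ℕ) : ℕ := (τ.takeWhile (fun x => x ≠ v)).length

lemma filter_ne_self {v : ℕ} {A : List ℕ} (hA : v ∉ A) : A.filter (fun x => x ≠ v) = A :=
  List.filter_eq_self.2 fun a ha => by
    simp only [ne_eq, decide_eq_true_eq]
    intro hc; exact hA (hc ▸ ha)

lemma rem_eq {v : ℕ} {A B : List ℕ} (hA : v ∉ A) (hB : v ∉ B) :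
    rem v (A ++ v :: v :: B) = A ++ B := by
  rw [rem, List.filter_append, filter_ne_self hA]
  simp only [List.filter_cons]
  rw [filter_ne_self hB]
  simp

lemma takeWhile_split {v : ℕ} {A B : List ℕ} (hA : v ∉ A) :
    (A ++ v :: B).takeWhile (fun x => x ≠ v) = A := by
  induction A with
  | nil => simp [List.takeWhile_cons]
  | cons a t ih =>
    have hat : a ≠ v := fun hc => hA (by simp [hc])
    have hvt : v ∉ t := fun hc => hA (by simp [hc])
    simp only [List.cons_append, List.takeWhile_cons]
    rw [if_pos (by simpa using hat), ih hvt]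

lemma fi_decomp {v : ℕ} {A B : List ℕ} (hA : v ∉ A) : fi v (A ++ v :: B) = A.length := by
  rw [fi, takeWhile_split hA]

lemma ins_decomp {v : ℕ} {A B : List ℕ} : ins (A ++ B) A.length v = A ++ v :: v :: B := by
  rw [ins, List.take_left, List.drop_left]

lemma sand_of_ins {σ : List ℕ} {j v : ℕ} (hj : j ≤ σ.length)
    (h : ∀ i s k, i < s → s < k → k < (ins σ j v).length →
      (ins σ j v).getD i 0 = (ins σ j v).getD k 0 →
      (ins σ j v).getD i 0 < (ins σ j v).getD s 0) :
    ∀ i s k, i < s → s < k → k < σ.length → σ.getD i 0 = σ.getD k 0 →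
      σ.getD i 0 < σ.getD s 0 := by
  intro i s k his hsk hk hval
  have G := getD_ins σ j v hj
  have f : ∀ m, σ.getD m 0 = (ins σ j v).getD (if m < j then m else m + 2) 0 := by
    intro m
    by_cases hm : m < j
    · rw [if_pos hm, G m, if_pos hm]
    · rw [if_neg hm, G (m + 2), if_neg (by omega), if_neg (by omega), Nat.add_sub_cancel]
  rw [f i, f k] at hval
  rw [f i, f s]
  refine h _ _ _ ?_ ?_ ?_ hval
  · split_ifs <;> omega
  · split_ifs <;> omega
  · rw [length_ins _ _ _ hj]; split_ifs <;> omega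

lemma stir_rem {n : ℕ} {A B : List ℕ} (h : IsStirling (n + 1) (A ++ (n + 1) :: (n + 1) :: B)) :
    IsStirling n (A ++ B) := by
  have hj : A.length ≤ (A ++ B).length := by simp
  have hins : ins (A ++ B) A.length (n + 1) = A ++ (n + 1) :: (n + 1) :: B := ins_decomp
  constructor
  · intro m
    have hc := h.1 m
    rw [← hins, count_ins] at hc
    split_ifs at hc ⊢ <;> omega
  · exact sand_of_ins hj (by rw [hins]; exact h.2)
def base : ℕ → List ℕ
  | 0 => []
  | n + 1 => base n ++ [n + 1, n + 1]

lemma count_base (n m : ℕ) : (base n).count m = if 1 ≤ m ∧ m ≤ n then 2 else 0 := by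
  induction n with
  | zero => rw [if_neg (by omega)]; simp [base]
  | succ k ih =>
    rw [show base (k + 1) = base k ++ [k + 1, k + 1] from rfl, List.count_append, ih]
    have e2 : List.count m [k + 1, k + 1] = if k + 1 = m then 2 else 0 := by
      simp only [List.count_cons, List.count_nil, beq_iff_eq]
      split_ifs <;> omega
    rw [e2]
    by_cases h1 : 1 ≤ m ∧ m ≤ k
    · rw [if_pos h1, if_neg (show ¬ k + 1 = m by omega), if_pos (show 1 ≤ m ∧ m ≤ k + 1 by omega)]
    · by_cases h2 : k + 1 = m
      · rw [if_neg h1, if_pos h2, if_pos (show 1 ≤ m ∧ m ≤ k + 1 by omega)]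
      · rw [if_neg h1, if_neg h2,
          if_neg (show ¬ (1 ≤ m ∧ m ≤ k + 1) from fun hc => h1 ⟨hc.1, by have := hc.2; omega⟩)]

lemma stir_finite (n : ℕ) : {σ : List ℕ | IsStirling n σ}.Finite := by
  apply Set.Finite.subset ((base n).permutations.toFinset : Finset (List ℕ)).finite_toSet
  intro σ hσ
  simp only [Finset.coe_sort_coe, Finset.mem_coe, List.mem_toFinset, List.mem_permutations]
  exact (List.perm_iff_count).2 fun m => by rw [hσ.1 m, count_base]

open MvPolynomial in
lemma Cpoly_eq (n : ℕ) : Cpoly n = ∑ σ ∈ (stir_finite n).toFinset, mono σ :=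
  finsum_mem_eq_finite_toFinset_sum _ (stir_finite n)

open MvPolynomial in
lemma Dstep (D : Derivation ℚ (MvPolynomial (Fin 3) ℚ) (MvPolynomial (Fin 3) ℚ))
    (hD : ∀ i : Fin 3, D (X i) = X 0 * X 1 * X 2) {n : ℕ} (hn : 1 ≤ n) :
    D (Cpoly n) = Cpoly (n + 1) := by
  rw [Cpoly_eq n, Cpoly_eq (n + 1), map_sum]
  rw [Finset.sum_congr rfl (fun σ hσ => (sum_ins_eq_D D hD
    ((stir_finite n).mem_toFinset.1 hσ) hn).symm)]
  rw [← Finset.sum_product']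
  refine Finset.sum_nbij' (i := fun p => ins p.1 p.2 (n + 1))
    (j := fun τ => (rem (n + 1) τ, fi (n + 1) τ)) ?_ ?_ ?_ ?_ ?_
  · rintro ⟨σ, j⟩ hp
    rw [Finset.mem_product] at hp
    have h := (stir_finite n).mem_toFinset.1 hp.1
    have hj : j ≤ σ.length := by
      rw [stir_length h]
      have := Finset.mem_range.1 hp.2; omega
    exact (stir_finite (n + 1)).mem_toFinset.2 (stir_ins h hj)
  · intro τ hτ
    have h := (stir_finite (n + 1)).mem_toFinset.1 hτ
    rcases stir_decomp h with ⟨A, B, rfl, hA, hB⟩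
    rw [Finset.mem_product, rem_eq hA hB, fi_decomp hA]
    constructor
    · exact (stir_finite n).mem_toFinset.2 (stir_rem h)
    · rw [Finset.mem_range]
      have := stir_length h
      simp only [List.length_append, List.length_cons] at this
      have := stir_length (stir_rem h)
      simp only [List.length_append] at this
      omega
  · rintro ⟨σ, j⟩ hp
    rw [Finset.mem_product] at hp
    have h := (stir_finite n).mem_toFinset.1 hp.1
    have hj : j ≤ σ.length := by
      rw [stir_length h]
      have := Finset.mem_range.1 hp.2; omega
    have hv : (n + 1) ∉ σ := fun hc => by have := stir_mem h hc; omega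
    have hvt : (n + 1) ∉ σ.take j := fun hc => hv ((σ.take_sublist j).mem hc)
    have hvd : (n + 1) ∉ σ.drop j := fun hc => hv ((σ.drop_sublist j).mem hc)
    have e1 : rem (n + 1) (ins σ j (n + 1)) = σ := by
      rw [show ins σ j (n + 1) = σ.take j ++ (n + 1) :: (n + 1) :: σ.drop j from rfl,
        rem_eq hvt hvd, List.take_append_drop]
    have e2 : fi (n + 1) (ins σ j (n + 1)) = j := by
      rw [show ins σ j (n + 1) = σ.take j ++ (n + 1) :: ((n + 1) :: σ.drop j) from rfl,
        fi_decomp hvt, List.length_take]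
      exact min_eq_left hj
    simp [e1, e2]
  · intro τ hτ
    have h := (stir_finite (n + 1)).mem_toFinset.1 hτ
    rcases stir_decomp h with ⟨A, B, rfl, hA, hB⟩
    simp only [rem_eq hA hB, fi_decomp hA]
    exact ins_decomp
  · rintro ⟨σ, j⟩ _
    rfl

open MvPolynomial in
lemma stir_one : {σ : List ℕ | IsStirling 1 σ} = {[1, 1]} := by
  ext σ
  simp only [Set.mem_setOf_eq, Set.mem_singleton_iff]
  constructor
  · intro h
    have hlen : σ.length = 2 := by rw [stir_length h]
    rcases List.length_eq_two.1 hlen with ⟨x, y, rfl⟩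
    have hx := stir_mem h (show x ∈ [x, y] by simp)
    have hy := stir_mem h (show y ∈ [x, y] by simp)
    have hx1 : x = 1 := by omega
    have hy1 : y = 1 := by omega
    rw [hx1, hy1]
  · rintro rfl
    constructor
    · intro m
      by_cases h1 : m = 1
      · subst h1; decide
      · rw [if_neg (by omega)]
        simp [List.count_cons, (show ¬ ((1:ℕ) = m) by omega)]
    · intro i s j h1 h2 h3 _
      simp only [List.length_cons, List.length_nil] at h3
      omega

open MvPolynomial in
lemma Cpoly_one : Cpoly 1 = (X 0 : MvPolynomial (Fin 3) ℚ) * X 1 * X 2 := by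
  rw [Cpoly, stir_one, finsum_mem_singleton]
  have ha : ascQ [1, 1] = 1 := by decide
  have hp : platQ [1, 1] = 1 := by decide
  have hd : desQ [1, 1] = 1 := by decide
  rw [ha, hp, hd, pow_one, pow_one, pow_one]

end StirAux

theorem derivation_iterate_eq_Cpoly
    (D : Derivation ℚ (MvPolynomial (Fin 3) ℚ) (MvPolynomial (Fin 3) ℚ))
    (hD : ∀ i : Fin 3, D (X i) = X 0 * X 1 * X 2) :
    ∀ n : ℕ, 1 ≤ n → (fun p => D p)^[n] (X 0) = Cpoly n := by
  intro n hn
  induction n with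
  | zero => omega
  | succ k ih =>
    rcases Nat.eq_zero_or_pos k with rfl | hk
    · rw [Function.iterate_one]
      show D (X 0) = Cpoly 1
      rw [StirAux.Cpoly_one]
      exact hD 0
    · rw [Function.iterate_succ_apply']
      show D ((fun p => D p)^[k] (X 0)) = Cpoly (k + 1)
      rw [ih hk]
      exact StirAux.Dstep D hD hk
end

section
/- The joint distribution of the ascent, plateau, descent statistics over Stirling permutations of {1,1,...,n,n} equals the joint distribution of exterior left nodes, exterior middle nodes, exterior right nodes over ternary increasing trees of size n: Σ_{σ ∈ Q_n} x^{asc(σ)} y^{plat(σ)} z^{des(σ)} = Σ_{T ∈ T_n} x^{exl(T)} y^{exm(T)} z^{exr(T)}. -/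
/-- Ternary plane trees: a tree is either an (unlabelled) exterior node, or an
interior node carrying a label together with an ordered triple of subtrees
(left, middle, right children). -/
inductive TTree where
  | leaf : TTree
  | node : ℕ → TTree → TTree → TTree → TTree

/-- The multiset of labels of the interior nodes. -/
def TTree.labels : TTree → Multiset ℕ
  | .leaf => 0
  | .node v l m r => v ::ₘ (l.labels + m.labels + r.labels)

/-- The tree is increasing: labels strictly increase along any path away from the root. -/
def TTree.Increasing : TTree → Prop
  | .leaf => True
  | .node v l m r => (∀ u ∈ l.labels + m.labels + r.labels, v < u) ∧
      l.Increasing ∧ m.Increasing ∧ r.Increasing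

/-- Indicator: `1` if the tree is a single exterior node. -/
def TTree.isLeaf : TTree → ℕ
  | .leaf => 1
  | _ => 0

/-- The number of exterior left nodes. -/
def TTree.exl : TTree → ℕ
  | .leaf => 0
  | .node _ l m r => l.isLeaf + l.exl + m.exl + r.exl

/-- The number of exterior middle nodes. -/
def TTree.exm : TTree → ℕ
  | .leaf => 0
  | .node _ l m r => m.isLeaf + l.exm + m.exm + r.exm

/-- The number of exterior right nodes. -/
def TTree.exr : TTree → ℕ
  | .leaf => 0
  | .node _ l m r => r.isLeaf + l.exr + m.exr + r.exr

/-- A ternary increasing tree of size `n`: interior nodes labelled by `1,…,n`,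
labels increasing along paths. -/
def IsTernaryIncreasing (n : ℕ) (T : TTree) : Prop :=
  T.Increasing ∧ T.labels = Multiset.map (· + 1) (Multiset.range n)

namespace SA


def TTree.toList : TTree → List ℕ
  | .leaf => []
  | .node v l m r => TTree.toList l ++ v :: (TTree.toList m ++ v :: TTree.toList r)

lemma count_toList (T : TTree) (x : ℕ) : (TTree.toList T).count x = 2 * T.labels.count x := by
  induction T with
  | leaf => simp [TTree.toList, TTree.labels]
  | node v l m r ihl ihm ihr =>
    simp [TTree.toList, TTree.labels, List.count_append, List.count_cons, ihl, ihm, ihr,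
      Multiset.count_cons, Multiset.count_add]
    by_cases h : x = v <;> simp [h, eq_comm] <;> omega

lemma mem_toList {T : TTree} {x : ℕ} : x ∈ TTree.toList T ↔ x ∈ T.labels := by
  rw [← List.count_pos_iff, ← Multiset.count_pos, count_toList]; omega

/-- the "between equal letters everything is bigger" property -/
def midP (w : List ℕ) : Prop :=
  ∀ i s j : ℕ, i < s → s < j → j < w.length → w.getD i 0 = w.getD j 0 → w.getD i 0 < w.getD s 0

lemma midP_nil : midP [] := by intro i s j _ h2 h3; simp at h3

lemma midP_append_left {X Y : List ℕ} (h : midP (X ++ Y)) : midP X := by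
  intro i s j h1 h2 h3 he
  have hi : i < X.length := by omega
  have hs : s < X.length := by omega
  have e1 := List.getD_append X Y 0 i (by omega)
  have e2 := List.getD_append X Y 0 s (by omega)
  have e3 := List.getD_append X Y 0 j h3
  have := h i s j h1 h2 (by simp; omega) (by rw [e1, e3]; exact he)
  rwa [e1, e2] at this

lemma midP_append_right {X Y : List ℕ} (h : midP (X ++ Y)) : midP Y := by
  intro i s j h1 h2 h3 he
  have L := X.length
  have e : ∀ t, (X ++ Y).getD (X.length + t) 0 = Y.getD t 0 := fun t => by
    rw [List.getD_append_right X Y 0 _ (by omega)]; congr 1; omega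
  have := h (X.length + i) (X.length + s) (X.length + j) (by omega) (by omega)
    (by simp; omega) (by rw [e, e]; exact he)
  rwa [e, e] at this

lemma midP_cons {a : ℕ} {Y : List ℕ} (h : midP (a :: Y)) : midP Y :=
  midP_append_right (X := [a]) h

lemma midP_glue {X Y : List ℕ} {v : ℕ} (hX : midP X) (hY : midP Y)
    (hdisj : ∀ a ∈ X, a ∉ Y) (hvX : v ∉ X)
    (hYv : ∀ j', j' < Y.length → Y.getD j' 0 = v → ∀ s' < j', v < Y.getD s' 0) :
    midP (X ++ v :: Y) := by
  intro i s j h1 h2 h3 he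
  simp only [List.length_append, List.length_cons] at h3
  have eX : ∀ t, t < X.length → (X ++ v :: Y).getD t 0 = X.getD t 0 :=
    fun t ht => List.getD_append X _ 0 t ht
  have ev : (X ++ v :: Y).getD X.length 0 = v := by
    rw [List.getD_append_right X _ 0 _ (le_refl _)]; simp
  have eY : ∀ t, (X ++ v :: Y).getD (X.length + 1 + t) 0 = Y.getD t 0 := fun t => by
    rw [List.getD_append_right X _ 0 _ (by omega)]
    have : X.length + 1 + t - X.length = t + 1 := by omega
    rw [this]; simp [List.getD]
  have memX : ∀ t, t < X.length → (X ++ v :: Y).getD t 0 ∈ X := by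
    intro t ht; rw [eX t ht, List.getD_eq_getElem X 0 ht]; exact List.getElem_mem ht
  have memY : ∀ t, X.length < t → t < X.length + 1 + Y.length → (X ++ v :: Y).getD t 0 ∈ Y := by
    intro t ht ht2
    have : t = X.length + 1 + (t - X.length - 1) := by omega
    rw [this, eY, List.getD_eq_getElem Y 0 (by omega)]
    exact List.getElem_mem _
  rcases lt_trichotomy j X.length with hj | hj | hj
  · -- all inside X
    rw [eX i (by omega), eX s (by omega)]
    rw [eX i (by omega), eX j hj] at he
    exact hX i s j h1 h2 hj he
  · -- j at the v
    exfalso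
    subst hj
    have : (X ++ v :: Y).getD i 0 ∈ X := memX i (by omega)
    rw [he, ev] at this
    exact hvX this
  · rcases lt_trichotomy i X.length with hi | hi | hi
    · -- i in X, j in Y : contradiction with disjointness
      exfalso
      have h1' : (X ++ v :: Y).getD i 0 ∈ X := memX i hi
      have h2' : (X ++ v :: Y).getD j 0 ∈ Y := memY j hj (by omega)
      rw [he] at h1'
      exact hdisj _ h1' h2'
    · -- i at the v, j in Y with value v
      subst hi
      have hjv : Y.getD (j - X.length - 1) 0 = v := by
        have hr : j = X.length + 1 + (j - X.length - 1) := by omega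
        rw [hr, eY] at he; rw [← he, ev]
      rw [ev]
      rcases lt_trichotomy s X.length with hs | hs | hs
      · omega
      · omega
      · have : s = X.length + 1 + (s - X.length - 1) := by omega
        rw [this, eY]
        exact hYv (j - X.length - 1) (by omega) hjv (s - X.length - 1) (by omega)
    · -- all in Y
      have ri : i = X.length + 1 + (i - X.length - 1) := by omega
      have rs : s = X.length + 1 + (s - X.length - 1) := by omega
      have rj : j = X.length + 1 + (j - X.length - 1) := by omega
      rw [ri, eY, rs, eY]
      rw [ri, eY, rj, eY] at he
      exact hY _ _ _ (by omega) (by omega) (by omega) he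



lemma midP_toList (T : TTree) (hI : T.Increasing) (hN : T.labels.Nodup) :
    midP (TTree.toList T) := by
  induction T with
  | leaf => exact midP_nil
  | node v l m r ihl ihm ihr =>
    obtain ⟨hlt, hIl, hIm, hIr⟩ := hI
    rw [TTree.labels, Multiset.nodup_cons] at hN
    obtain ⟨hvn, hsum⟩ := hN
    rw [Multiset.nodup_add] at hsum
    obtain ⟨hlm, hr, hdlmr⟩ := hsum
    rw [Multiset.nodup_add] at hlm
    obtain ⟨hl, hm, hdlm⟩ := hlm
    rw [Multiset.disjoint_add_left] at hdlmr
    obtain ⟨hdlr, hdmr⟩ := hdlmr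
    have hvl : v ∉ l.labels := fun h => hvn (by simp [Multiset.mem_add]; tauto)
    have hvm : v ∉ m.labels := fun h => hvn (by simp [Multiset.mem_add]; tauto)
    have hvr : v ∉ r.labels := fun h => hvn (by simp [Multiset.mem_add]; tauto)
    have hltl : ∀ u ∈ l.labels, v < u := fun u h => hlt u (by simp [Multiset.mem_add]; tauto)
    have hltm : ∀ u ∈ m.labels, v < u := fun u h => hlt u (by simp [Multiset.mem_add]; tauto)
    have hltr : ∀ u ∈ r.labels, v < u := fun u h => hlt u (by simp [Multiset.mem_add]; tauto)
    rw [TTree.toList]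
    have hmidY : midP (TTree.toList m ++ v :: TTree.toList r) := by
      apply midP_glue (ihm hIm hm) (ihr hIr hr)
      · intro a ha hb
        exact Multiset.disjoint_left.mp hdmr (mem_toList.mp ha) (mem_toList.mp hb)
      · exact fun h => hvm (mem_toList.mp h)
      · intro j' hj' hval s' hs'
        exfalso
        have : v ∈ TTree.toList r := by
          rw [← hval, List.getD_eq_getElem _ 0 hj']; exact List.getElem_mem hj'
        exact hvr (mem_toList.mp this)
    apply midP_glue (ihl hIl hl) hmidY
    · intro a ha hb
      have haL : a ∈ l.labels := mem_toList.mp ha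
      rcases List.mem_append.mp hb with hb | hb
      · exact Multiset.disjoint_left.mp hdlm haL (mem_toList.mp hb)
      · rcases List.mem_cons.mp hb with hb | hb
        · exact hvl (hb ▸ haL)
        · exact Multiset.disjoint_left.mp hdlr haL (mem_toList.mp hb)
    · exact fun h => hvl (mem_toList.mp h)
    · -- positions before a `v` in M ++ v :: R are > v
      intro j' hj' hval s' hs'
      set M := TTree.toList m with hM
      rcases lt_trichotomy j' M.length with hj | hj | hj
      · exfalso
        rw [List.getD_append _ _ 0 _ hj, List.getD_eq_getElem _ 0 hj] at hval
        exact hvm (mem_toList.mp (hval ▸ List.getElem_mem hj))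
      · have hsM : s' < M.length := by omega
        rw [List.getD_append _ _ 0 _ hsM, List.getD_eq_getElem _ 0 hsM]
        exact hltm _ (mem_toList.mp (List.getElem_mem hsM))
      · exfalso
        have hr1 : j' - M.length - 1 < (TTree.toList r).length := by
          simp only [List.length_append, List.length_cons] at hj'; omega
        rw [List.getD_append_right _ _ 0 _ (by omega)] at hval
        have : j' - M.length = (j' - M.length - 1) + 1 := by omega
        rw [this] at hval
        simp only [List.getD_cons_succ] at hval
        rw [List.getD_eq_getElem _ 0 hr1] at hval
        exact hvr (mem_toList.mp (hval ▸ List.getElem_mem hr1))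



def cnt (R : ℕ → ℕ → Prop) [DecidableRel R] (w : List ℕ) : ℕ :=
  ((Finset.range (w.length - 1)).filter fun i => R (w.getD i 0) (w.getD (i+1) 0)).card

variable {R : ℕ → ℕ → Prop} [DecidableRel R]

lemma cnt_single (a : ℕ) : cnt R [a] = 0 := by simp [cnt]

lemma cnt_cons (a : ℕ) {w : List ℕ} (hw : w ≠ []) :
    cnt R (a :: w) = (if R a (w.getD 0 0) then 1 else 0) + cnt R w := by
  obtain ⟨b, w', rfl⟩ := List.exists_cons_of_ne_nil hw
  simp only [cnt, List.length_cons, Nat.add_sub_cancel]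
  rw [Finset.card_filter, Finset.card_filter, Finset.sum_range_succ']
  simp only [List.getD_cons_succ, List.getD_cons_zero]
  omega

lemma cnt_pair (a b : ℕ) : cnt R [a, b] = if R a b then 1 else 0 := by
  rw [cnt_cons a (by simp), cnt_single]; simp [List.getD]

lemma cnt_glue (X : List ℕ) (c : ℕ) (Y : List ℕ) :
    cnt R (X ++ c :: Y) = cnt R (X ++ [c]) + cnt R (c :: Y) := by
  induction X with
  | nil => simp [cnt_single]
  | cons a X ih =>
    have h1 : (X ++ c :: Y) ≠ [] := by simp
    have h2 : (X ++ [c]) ≠ [] := by simp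
    rw [List.cons_append, cnt_cons a h1, List.cons_append, cnt_cons a h2, ih]
    have : (X ++ c :: Y).getD 0 0 = (X ++ [c]).getD 0 0 := by
      cases X with
      | nil => simp [List.getD]
      | cons b X' => simp [List.getD]
    rw [this]; omega

lemma cnt_snoc' (X : List ℕ) (c b : ℕ) :
    cnt R ((X ++ [c]) ++ [b]) = cnt R (X ++ [c]) + if R c b then 1 else 0 := by
  rw [List.append_assoc]
  show cnt R (X ++ c :: [b]) = _
  rw [cnt_glue, cnt_pair]

/-- The key structural lemma: statistics of the bracketed word of a tree. -/
lemma stats (T : TTree) (hI : T.Increasing) :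
    ∀ a b : ℕ, (∀ u ∈ T.labels, a < u) → (∀ u ∈ T.labels, b < u) →
    cnt (· < ·) (a :: (TTree.toList T ++ [b])) = T.exl + T.isLeaf * (if a < b then 1 else 0) ∧
    cnt (· = ·) (a :: (TTree.toList T ++ [b])) = T.exm + T.isLeaf * (if a = b then 1 else 0) ∧
    cnt (fun p q => q < p) (a :: (TTree.toList T ++ [b]))
      = T.exr + T.isLeaf * (if b < a then 1 else 0) := by
  induction T with
  | leaf =>
    intro a b _ _
    simp [TTree.toList, TTree.exl, TTree.exm, TTree.exr, TTree.isLeaf, cnt_pair]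
  | node v l m r ihl ihm ihr =>
    intro a b ha hb
    obtain ⟨hlt, hIl, hIm, hIr⟩ := hI
    have hltl : ∀ u ∈ l.labels, v < u := fun u h => hlt u (by simp [Multiset.mem_add]; tauto)
    have hltm : ∀ u ∈ m.labels, v < u := fun u h => hlt u (by simp [Multiset.mem_add]; tauto)
    have hltr : ∀ u ∈ r.labels, v < u := fun u h => hlt u (by simp [Multiset.mem_add]; tauto)
    have hal : ∀ u ∈ l.labels, a < u := fun u h => ha u (by simp [TTree.labels]; tauto)
    have hbr : ∀ u ∈ r.labels, b < u := fun u h => hb u (by simp [TTree.labels]; tauto)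
    have hav : a < v := ha v (by simp [TTree.labels])
    have hbv : b < v := hb v (by simp [TTree.labels])
    have key : ∀ (S : ℕ → ℕ → Prop) [DecidableRel S],
        cnt S (a :: (TTree.toList (.node v l m r) ++ [b])) =
        cnt S (a :: (TTree.toList l ++ [v])) + cnt S (v :: (TTree.toList m ++ [v]))
          + cnt S (v :: (TTree.toList r ++ [b])) := by
      intro S _
      have e1 : a :: (TTree.toList (.node v l m r) ++ [b]) =
          (a :: TTree.toList l) ++ v :: (TTree.toList m ++ v :: (TTree.toList r ++ [b])) := by
        simp [TTree.toList]
      rw [e1, cnt_glue (a :: TTree.toList l) v]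
      have e2 : v :: (TTree.toList m ++ v :: (TTree.toList r ++ [b])) =
          (v :: TTree.toList m) ++ v :: (TTree.toList r ++ [b]) := by simp
      rw [e2, cnt_glue (v :: TTree.toList m) v]
      have e3 : (a :: TTree.toList l) ++ [v] = a :: (TTree.toList l ++ [v]) := by simp
      have e4 : (v :: TTree.toList m) ++ [v] = v :: (TTree.toList m ++ [v]) := by simp
      rw [e3, e4]; ring
    obtain ⟨l1, l2, l3⟩ := ihl hIl a v hal hltl
    obtain ⟨m1, m2, m3⟩ := ihm hIm v v hltm hltm
    obtain ⟨r1, r2, r3⟩ := ihr hIr v b hltr hbr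
    refine ⟨?_, ?_, ?_⟩
    · rw [key, l1, m1, r1]
      simp only [TTree.exl, TTree.isLeaf]
      have : ¬ (v < b) := by omega
      simp [hav, this]
      ring
    · rw [key, l2, m2, r2]
      simp only [TTree.exm, TTree.isLeaf]
      have h1 : ¬ (a = v) := by omega
      have h2 : ¬ (v = b) := by omega
      simp [h1, h2]
      ring
    · rw [key, l3, m3, r3]
      simp only [TTree.exr, TTree.isLeaf]
      have h1 : ¬ (v < a) := by omega
      simp [h1, hbv]
      ring



lemma Icc_filter_card (L : ℕ) (p : ℕ → Prop) [DecidablePred p] :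
    ((Finset.Icc 1 L).filter p).card = ((Finset.range L).filter fun j => p (j+1)).card := by
  apply Finset.card_bij (fun (a : ℕ) _ => a - 1)
  · intro a ha
    simp only [Finset.mem_filter, Finset.mem_Icc] at ha
    simp only [Finset.mem_filter, Finset.mem_range]
    have h : a - 1 + 1 = a := by omega
    rw [h]
    exact ⟨by omega, ha.2⟩
  · intro a ha b hb h
    simp only [Finset.mem_filter, Finset.mem_Icc] at ha hb
    omega
  · intro b hb
    simp only [Finset.mem_filter, Finset.mem_range] at hb
    refine ⟨b+1, ?_, by omega⟩
    simp only [Finset.mem_filter, Finset.mem_Icc]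
    exact ⟨⟨by omega, by omega⟩, hb.2⟩

lemma ent_eq (σ : List ℕ) (j : ℕ) : ent σ j = (0 :: σ).getD j 0 := by
  cases j <;> simp [ent, List.getD]

lemma ent_succ (σ : List ℕ) (j : ℕ) : ent σ (j+1) = σ.getD j 0 := by simp [ent]

lemma getD_snoc0 (σ : List ℕ) (t : ℕ) : (σ ++ [0]).getD t 0 = σ.getD t 0 := by
  induction σ generalizing t with
  | nil => cases t <;> simp [List.getD]
  | cons a σ ih =>
    cases t with
    | zero => simp [List.getD]
    | succ n => simpa [List.getD] using ih n

lemma ascQ_eq (σ : List ℕ) : ascQ σ = cnt (· < ·) (0 :: σ) := by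
  rw [ascQ, Icc_filter_card]
  simp only [cnt, List.length_cons, Nat.add_sub_cancel]
  congr 1
  apply Finset.filter_congr
  intro j _
  simp only [Nat.add_sub_cancel, ent_eq, eq_iff_iff]

lemma platQ_eq (σ : List ℕ) : platQ σ = cnt (· = ·) σ := by
  rw [platQ, Icc_filter_card]
  simp only [cnt]
  congr 1

lemma desQ_eq (σ : List ℕ) : desQ σ = cnt (fun p q => q < p) (σ ++ [0]) := by
  rw [desQ, Icc_filter_card]
  simp only [cnt, List.length_append, List.length_cons, List.length_nil, Nat.add_sub_cancel]
  congr 1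
  apply Finset.filter_congr
  intro j _
  simp only [ent_succ, getD_snoc0, eq_iff_iff]

lemma stats_toList (T : TTree) (hI : T.Increasing) (hpos : ∀ u ∈ T.labels, 0 < u) :
    ascQ (TTree.toList T) = T.exl ∧ platQ (TTree.toList T) = T.exm ∧
      desQ (TTree.toList T) = T.exr := by
  cases T with
  | leaf =>
    simp [ascQ, platQ, desQ, TTree.toList, TTree.exl, TTree.exm, TTree.exr]
  | node v l m r =>
    obtain ⟨s1, s2, s3⟩ := stats (.node v l m r) hI 0 0 hpos hpos
    set w := TTree.toList (TTree.node v l m r) with hwdef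
    have hw : w ≠ [] := by simp [hwdef, TTree.toList]
    obtain ⟨h, t, hht⟩ := List.exists_cons_of_ne_nil hw
    have hh : 0 < h := hpos h (mem_toList.mp (by rw [← hwdef, hht]; simp))
    rcases List.eq_nil_or_concat w with hc | ⟨X, c, hXc⟩
    · exact absurd hc hw
    rw [List.concat_eq_append] at hXc
    have hcpos : 0 < c := hpos c (mem_toList.mp (by rw [← hwdef, hXc]; simp))
    have hileaf : TTree.isLeaf (.node v l m r) = 0 := rfl
    rw [hileaf] at s1 s2 s3
    simp only [Nat.zero_mul, Nat.add_zero] at s1 s2 s3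
    refine ⟨?_, ?_, ?_⟩
    · -- ascents
      rw [ascQ_eq, ← s1]
      have e : (0 : ℕ) :: (w ++ [0]) = ((0 :: X) ++ [c]) ++ [0] := by rw [hXc]; simp
      rw [e, cnt_snoc']
      have : ¬ (c < 0) := by omega
      simp [this, hXc]
    · -- plateaux
      rw [platQ_eq, ← s2]
      have hwz : w ++ [0] ≠ [] := by simp
      rw [cnt_cons 0 hwz]
      have hg : (w ++ [0]).getD 0 0 = h := by rw [hht]; simp [List.getD]
      rw [hg]
      have h1 : ¬ ((0:ℕ) = h) := by omega
      have e : w ++ [0] = (X ++ [c]) ++ [0] := by rw [hXc]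
      rw [e, cnt_snoc']
      have h2 : ¬ (c = 0) := by omega
      simp [h1, h2, hXc]
    · -- descents
      rw [desQ_eq, ← s3]
      have hwz : w ++ [0] ≠ [] := by simp
      rw [cnt_cons 0 hwz]
      have hg : (w ++ [0]).getD 0 0 = h := by rw [hht]; simp [List.getD]
      rw [hg]
      have h1 : ¬ (h < 0) := by omega
      simp [h1]



lemma append_cons_inj {v : ℕ} : ∀ {A C B D : List ℕ}, A ++ v :: B = C ++ v :: D →
    v ∉ A → v ∉ C → A = C ∧ B = D := by
  intro A
  induction A with
  | nil =>
    intro C B D h hA hC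
    cases C with
    | nil => simpa using h
    | cons c C' =>
      exfalso
      simp only [List.nil_append, List.cons_append, List.cons.injEq] at h
      exact hC (by rw [← h.1]; simp)
  | cons a A' ih =>
    intro C B D h hA hC
    cases C with
    | nil =>
      exfalso
      simp only [List.cons_append, List.nil_append, List.cons.injEq] at h
      exact hA (by rw [h.1]; simp)
    | cons c C' =>
      simp only [List.cons_append, List.cons.injEq] at h
      have hA' : v ∉ A' := fun hh => hA (by simp [hh])
      have hC' : v ∉ C' := fun hh => hC (by simp [hh])
      obtain ⟨h1, h2⟩ := ih h.2 hA' hC'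
      exact ⟨by rw [h.1, h1], h2⟩

lemma nodup_parts {v : ℕ} {l m r : TTree}
    (hN : (TTree.node v l m r).labels.Nodup) :
    l.labels.Nodup ∧ m.labels.Nodup ∧ r.labels.Nodup ∧
    v ∉ l.labels ∧ v ∉ m.labels ∧ v ∉ r.labels := by
  rw [TTree.labels, Multiset.nodup_cons] at hN
  obtain ⟨hvn, hsum⟩ := hN
  rw [Multiset.nodup_add] at hsum
  obtain ⟨hlm, hr, _⟩ := hsum
  rw [Multiset.nodup_add] at hlm
  refine ⟨hlm.1, hlm.2.1, hr, ?_, ?_, ?_⟩ <;>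
    (intro h; exact hvn (by simp [Multiset.mem_add]; tauto))

lemma toList_inj : ∀ T T' : TTree, T.Increasing → T'.Increasing →
    T.labels.Nodup → T'.labels.Nodup → TTree.toList T = TTree.toList T' → T = T' := by
  intro T
  induction T with
  | leaf =>
    intro T' _ _ _ _ h
    cases T' with
    | leaf => rfl
    | node v' l' m' r' => exfalso; rw [TTree.toList, TTree.toList] at h; simp at h
  | node v l m r ihl ihm ihr =>
    intro T' hI hI' hN hN' h
    cases T' with
    | leaf => exfalso; rw [TTree.toList, TTree.toList] at h; simp at h
    | node v' l' m' r' =>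
      have hlab : (TTree.node v l m r).labels = (TTree.node v' l' m' r').labels := by
        ext u
        have h1 := count_toList (TTree.node v l m r) u
        have h2 := count_toList (TTree.node v' l' m' r') u
        rw [h] at h1
        omega
      obtain ⟨hlt, hIl, hIm, hIr⟩ := hI
      obtain ⟨hlt', hIl', hIm', hIr'⟩ := hI'
      obtain ⟨hNl, hNm, hNr, hvl, hvm, hvr⟩ := nodup_parts hN
      obtain ⟨hNl', hNm', hNr', hvl', hvm', hvr'⟩ := nodup_parts hN'
      have hvv : v = v' := by
        by_contra hne
        have hv'mem : v' ∈ (TTree.node v l m r).labels := by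
          rw [hlab, TTree.labels]; exact Multiset.mem_cons_self _ _
        rw [TTree.labels, Multiset.mem_cons] at hv'mem
        have hvmem : v ∈ (TTree.node v' l' m' r').labels := by
          rw [← hlab, TTree.labels]; exact Multiset.mem_cons_self _ _
        rw [TTree.labels, Multiset.mem_cons] at hvmem
        have h1 : v' < v := hlt' v (hvmem.resolve_left hne)
        have h2 : v < v' := hlt v' (hv'mem.resolve_left (Ne.symm hne))
        omega
      subst hvv
      rw [TTree.toList, TTree.toList] at h
      have hvL : v ∉ TTree.toList l := fun hh => hvl (mem_toList.mp hh)
      have hvL' : v ∉ TTree.toList l' := fun hh => hvl' (mem_toList.mp hh)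
      obtain ⟨e1, h2⟩ := append_cons_inj h hvL hvL'
      have hvM : v ∉ TTree.toList m := fun hh => hvm (mem_toList.mp hh)
      have hvM' : v ∉ TTree.toList m' := fun hh => hvm' (mem_toList.mp hh)
      obtain ⟨e2, e3⟩ := append_cons_inj h2 hvM hvM'
      rw [ihl l' hIl hIl' hNl hNl' e1, ihm m' hIm hIm' hNm hNm' e2,
        ihr r' hIr hIr' hNr hNr' e3]



lemma first_split {v : ℕ} {σ : List ℕ} (h : v ∈ σ) :
    ∃ A Z, σ = A ++ v :: Z ∧ v ∉ A := by
  induction σ with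
  | nil => simp at h
  | cons a σ ih =>
    by_cases hav : a = v
    · exact ⟨[], σ, by rw [hav]; rfl, by simp⟩
    · have hv : v ∈ σ := by
        rcases List.mem_cons.mp h with h' | h'
        · exact absurd h'.symm hav
        · exact h'
      obtain ⟨A, Z, hAZ, hA⟩ := ih hv
      refine ⟨a :: A, Z, by rw [hAZ]; simp, ?_⟩
      simp only [List.mem_cons, not_or]
      exact ⟨fun hh => hav hh.symm, hA⟩

lemma midP_append_cons_right {X Y : List ℕ} {c : ℕ} (h : midP (X ++ c :: Y)) : midP Y := by
  have e : X ++ c :: Y = (X ++ [c]) ++ Y := by simp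
  rw [e] at h
  exact midP_append_right h

lemma exists_tree : ∀ k : ℕ, ∀ σ : List ℕ, σ.length ≤ k → ∀ S : Multiset ℕ, S.Nodup →
    (0 : ℕ) ∉ S → (∀ m : ℕ, σ.count m = 2 * S.count m) → midP σ →
    ∃ T : TTree, T.Increasing ∧ T.labels = S ∧ TTree.toList T = σ := by
  intro k
  induction k with
  | zero =>
    intro σ hlen S hN h0 hcnt _
    have hσ : σ = [] := List.eq_nil_of_length_eq_zero (by omega)
    subst hσ
    have hS : S = 0 := Multiset.eq_zero_of_forall_notMem fun u hu => by
      have h1 := hcnt u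
      simp only [List.count_nil] at h1
      have h2 := Multiset.count_pos.mpr hu
      omega
    exact ⟨.leaf, trivial, by simp [TTree.labels, hS], rfl⟩
  | succ k ih =>
    intro σ hlen S hN h0 hcnt hmid
    rcases eq_or_ne σ [] with rfl | hne
    · have hS : S = 0 := Multiset.eq_zero_of_forall_notMem fun u hu => by
        have h1 := hcnt u
        simp only [List.count_nil] at h1
        have h2 := Multiset.count_pos.mpr hu
        omega
      exact ⟨.leaf, trivial, by simp [TTree.labels, hS], rfl⟩
    have hmemS : ∀ u ∈ σ, u ∈ S := fun u hu => by
      have h1 : 0 < σ.count u := List.count_pos_iff.mpr hu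
      have h2 := hcnt u
      exact Multiset.count_pos.mp (by omega)
    have hSmem : ∀ u ∈ S, u ∈ σ := fun u hu => by
      have h1 : 0 < S.count u := Multiset.count_pos.mpr hu
      have h2 := hcnt u
      exact List.count_pos_iff.mp (by omega)
    have hFne : S.toFinset.Nonempty := by
      obtain ⟨a, σ', rfl⟩ := List.exists_cons_of_ne_nil hne
      exact ⟨a, Multiset.mem_toFinset.mpr (hmemS a (by simp))⟩
    set v := S.toFinset.min' hFne with hvdef
    have hvS : v ∈ S := Multiset.mem_toFinset.mp (S.toFinset.min'_mem hFne)
    have hvmin : ∀ u ∈ S, v ≤ u := fun u hu =>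
      S.toFinset.min'_le u (Multiset.mem_toFinset.mpr hu)
    have hv0 : 0 < v := by
      rcases Nat.eq_zero_or_pos v with h | h
      · exact absurd (h ▸ hvS) h0
      · exact h
    have hcv : σ.count v = 2 := by
      rw [hcnt v, Multiset.count_eq_one_of_mem hN hvS]
    obtain ⟨A, Z, hAZ, hvA⟩ := first_split (hSmem v hvS)
    have hcvA : A.count v = 0 := List.count_eq_zero.mpr hvA
    have hvZ : v ∈ Z := by
      rw [hAZ] at hcv
      apply List.count_pos_iff.mp
      simp only [List.count_append, List.count_cons_self, hcvA] at hcv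
      omega
    obtain ⟨B, C, hBC, hvB⟩ := first_split hvZ
    rw [hBC] at hAZ
    subst hAZ
    have hcvB : B.count v = 0 := List.count_eq_zero.mpr hvB
    have hcvC : C.count v = 0 := by
      simp only [List.count_append, List.count_cons, hcvA, hcvB] at hcv
      simp at hcv
      omega
    have hvC : v ∉ C := List.count_eq_zero.mp hcvC
    set w := A ++ v :: (B ++ v :: C) with hwdef
    have hlenw : w.length = A.length + B.length + C.length + 2 := by
      rw [hwdef]; simp; omega
    -- getD facts
    have eA : ∀ t, t < A.length → w.getD t 0 = A.getD t 0 := fun t ht => by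
      rw [hwdef]; exact List.getD_append _ _ 0 t ht
    have ev1 : w.getD A.length 0 = v := by
      rw [hwdef, List.getD_append_right _ _ 0 _ (le_refl _)]; simp
    have eB : ∀ t, t < B.length → w.getD (A.length + 1 + t) 0 = B.getD t 0 := fun t ht => by
      rw [hwdef, List.getD_append_right _ _ 0 _ (by omega)]
      have h : A.length + 1 + t - A.length = t + 1 := by omega
      rw [h, List.getD_cons_succ]
      exact List.getD_append _ _ 0 t ht
    have ev2 : w.getD (A.length + 1 + B.length) 0 = v := by
      rw [hwdef, List.getD_append_right _ _ 0 _ (by omega)]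
      have h : A.length + 1 + B.length - A.length = B.length + 1 := by omega
      rw [h, List.getD_cons_succ, List.getD_append_right _ _ 0 _ (le_refl _)]
      simp
    have eC : ∀ t, t < C.length → w.getD (A.length + B.length + 2 + t) 0 = C.getD t 0 :=
      fun t ht => by
      rw [hwdef, List.getD_append_right _ _ 0 _ (by omega)]
      have h : A.length + B.length + 2 + t - A.length = B.length + 1 + t + 1 := by omega
      rw [h, List.getD_cons_succ, List.getD_append_right _ _ 0 _ (by omega)]
      have h2 : B.length + 1 + t - B.length = t + 1 := by omega
      rw [h2, List.getD_cons_succ]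
    -- membership in w
    have hAw : ∀ u ∈ A, u ∈ w := fun u hu => by rw [hwdef]; simp [hu]
    have hBw : ∀ u ∈ B, u ∈ w := fun u hu => by rw [hwdef]; simp [hu]
    have hCw : ∀ u ∈ C, u ∈ w := fun u hu => by rw [hwdef]; simp [hu]
    -- cross-block exclusions
    have crossAB : ∀ u, u ∈ A → u ∈ B → False := by
      intro u huA huB
      obtain ⟨i, hi, hiv⟩ := List.getElem_of_mem huA
      obtain ⟨j, hj, hjv⟩ := List.getElem_of_mem huB
      have e1 : w.getD i 0 = u := by rw [eA i hi, List.getD_eq_getElem _ _ hi]; exact hiv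
      have e2 : w.getD (A.length + 1 + j) 0 = u := by
        rw [eB j hj, List.getD_eq_getElem _ _ hj]; exact hjv
      have hlt := hmid i A.length (A.length + 1 + j) (by omega) (by omega)
        (by omega) (by rw [e1, e2])
      rw [e1, ev1] at hlt
      have := hvmin u (hmemS u (hAw u huA))
      omega
    have crossAC : ∀ u, u ∈ A → u ∈ C → False := by
      intro u huA huC
      obtain ⟨i, hi, hiv⟩ := List.getElem_of_mem huA
      obtain ⟨j, hj, hjv⟩ := List.getElem_of_mem huC
      have e1 : w.getD i 0 = u := by rw [eA i hi, List.getD_eq_getElem _ _ hi]; exact hiv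
      have e2 : w.getD (A.length + B.length + 2 + j) 0 = u := by
        rw [eC j hj, List.getD_eq_getElem _ _ hj]; exact hjv
      have hlt := hmid i A.length (A.length + B.length + 2 + j) (by omega) (by omega)
        (by omega) (by rw [e1, e2])
      rw [e1, ev1] at hlt
      have := hvmin u (hmemS u (hAw u huA))
      omega
    have crossBC : ∀ u, u ∈ B → u ∈ C → False := by
      intro u huB huC
      obtain ⟨i, hi, hiv⟩ := List.getElem_of_mem huB
      obtain ⟨j, hj, hjv⟩ := List.getElem_of_mem huC
      have e1 : w.getD (A.length + 1 + i) 0 = u := by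
        rw [eB i hi, List.getD_eq_getElem _ _ hi]; exact hiv
      have e2 : w.getD (A.length + B.length + 2 + j) 0 = u := by
        rw [eC j hj, List.getD_eq_getElem _ _ hj]; exact hjv
      have hlt := hmid (A.length + 1 + i) (A.length + 1 + B.length)
        (A.length + B.length + 2 + j) (by omega) (by omega) (by omega) (by rw [e1, e2])
      rw [e1, ev2] at hlt
      have := hvmin u (hmemS u (hBw u huB))
      omega
    -- count dichotomies
    have htot : ∀ u, u ≠ v → A.count u + B.count u + C.count u = 2 * S.count u := by
      intro u huv
      have e := hcnt u
      rw [hwdef] at e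
      simp [List.count_append, List.count_cons, huv, Ne.symm huv] at e
      omega
    have hSle : ∀ u, S.count u ≤ 1 := fun u => Multiset.nodup_iff_count_le_one.mp hN u
    have hdichA : ∀ u, A.count u = 0 ∨ A.count u = 2 := by
      intro u
      by_cases huv : u = v
      · subst huv; exact Or.inl hcvA
      · have ht := htot u huv
        have hs := hSle u
        by_contra hc
        push_neg at hc
        have h1 : A.count u = 1 := by omega
        have huA : u ∈ A := List.count_pos_iff.mp (by omega)
        rcases (by omega : B.count u = 1 ∨ C.count u = 1) with hB | hC
        · exact crossAB u huA (List.count_pos_iff.mp (by omega))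
        · exact crossAC u huA (List.count_pos_iff.mp (by omega))
    have hdichB : ∀ u, B.count u = 0 ∨ B.count u = 2 := by
      intro u
      by_cases huv : u = v
      · subst huv; exact Or.inl hcvB
      · have ht := htot u huv
        have hs := hSle u
        by_contra hc
        push_neg at hc
        have h1 : B.count u = 1 := by omega
        have huB : u ∈ B := List.count_pos_iff.mp (by omega)
        rcases (by omega : A.count u = 1 ∨ C.count u = 1) with hA | hC
        · exact crossAB u (List.count_pos_iff.mp (by omega)) huB
        · exact crossBC u huB (List.count_pos_iff.mp (by omega))
    have hdichC : ∀ u, C.count u = 0 ∨ C.count u = 2 := by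
      intro u
      by_cases huv : u = v
      · subst huv; exact Or.inl hcvC
      · have ht := htot u huv
        have hs := hSle u
        by_contra hc
        push_neg at hc
        have h1 : C.count u = 1 := by omega
        have huC : u ∈ C := List.count_pos_iff.mp (by omega)
        rcases (by omega : A.count u = 1 ∨ B.count u = 1) with hA | hB
        · exact crossAC u (List.count_pos_iff.mp (by omega)) huC
        · exact crossBC u (List.count_pos_iff.mp (by omega)) huC
    -- label multisets of the three blocks
    set MA := (↑A : Multiset ℕ).dedup with hMAdef
    set MB := (↑B : Multiset ℕ).dedup with hMBdef
    set MC := (↑C : Multiset ℕ).dedup with hMCdef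
    have hcntA : ∀ m : ℕ, A.count m = 2 * MA.count m := by
      intro m
      rw [hMAdef, Multiset.count_dedup]
      rcases hdichA m with h | h
      · rw [h, if_neg (by rw [Multiset.mem_coe]; exact List.count_eq_zero.mp h)]
      · rw [h, if_pos (by rw [Multiset.mem_coe]; exact List.count_pos_iff.mp (by omega))]
    have hcntB : ∀ m : ℕ, B.count m = 2 * MB.count m := by
      intro m
      rw [hMBdef, Multiset.count_dedup]
      rcases hdichB m with h | h
      · rw [h, if_neg (by rw [Multiset.mem_coe]; exact List.count_eq_zero.mp h)]
      · rw [h, if_pos (by rw [Multiset.mem_coe]; exact List.count_pos_iff.mp (by omega))]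
    have hcntC : ∀ m : ℕ, C.count m = 2 * MC.count m := by
      intro m
      rw [hMCdef, Multiset.count_dedup]
      rcases hdichC m with h | h
      · rw [h, if_neg (by rw [Multiset.mem_coe]; exact List.count_eq_zero.mp h)]
      · rw [h, if_pos (by rw [Multiset.mem_coe]; exact List.count_pos_iff.mp (by omega))]
    have hMAmem : ∀ u ∈ MA, u ∈ A := fun u hu =>
      Multiset.mem_coe.mp (Multiset.mem_dedup.mp (hMAdef ▸ hu))
    have hMBmem : ∀ u ∈ MB, u ∈ B := fun u hu =>
      Multiset.mem_coe.mp (Multiset.mem_dedup.mp (hMBdef ▸ hu))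
    have hMCmem : ∀ u ∈ MC, u ∈ C := fun u hu =>
      Multiset.mem_coe.mp (Multiset.mem_dedup.mp (hMCdef ▸ hu))
    -- midP of the blocks
    have hmid' : midP (A ++ v :: (B ++ v :: C)) := by rw [hwdef] at hmid; exact hmid
    have hmidA : midP A := midP_append_left hmid'
    have hmidBC : midP (B ++ v :: C) := midP_append_cons_right hmid'
    have hmidB : midP B := midP_append_left hmidBC
    have hmidC : midP C := midP_append_cons_right hmidBC
    -- lengths
    have hlA : A.length ≤ k := by omega
    have hlB : B.length ≤ k := by omega
    have hlC : C.length ≤ k := by omega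
    -- recursive calls
    obtain ⟨TA, hIA, hLA, hTA⟩ := ih A hlA MA (Multiset.nodup_dedup _)
      (fun h => h0 (hmemS 0 (hAw 0 (hMAmem 0 h)))) hcntA hmidA
    obtain ⟨TB, hIB, hLB, hTB⟩ := ih B hlB MB (Multiset.nodup_dedup _)
      (fun h => h0 (hmemS 0 (hBw 0 (hMBmem 0 h)))) hcntB hmidB
    obtain ⟨TC, hIC, hLC, hTC⟩ := ih C hlC MC (Multiset.nodup_dedup _)
      (fun h => h0 (hmemS 0 (hCw 0 (hMCmem 0 h)))) hcntC hmidC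
    refine ⟨.node v TA TB TC, ⟨?_, hIA, hIB, hIC⟩, ?_, ?_⟩
    · -- increasing at the root
      intro u hu
      rw [hLA, hLB, hLC] at hu
      have huABC : u ∈ A ∨ u ∈ B ∨ u ∈ C := by
        rcases Multiset.mem_add.mp hu with h | h
        · rcases Multiset.mem_add.mp h with h | h
          · exact Or.inl (hMAmem u h)
          · exact Or.inr (Or.inl (hMBmem u h))
        · exact Or.inr (Or.inr (hMCmem u h))
      have huw : u ∈ w := by
        rcases huABC with h | h | h
        · exact hAw u h
        · exact hBw u h
        · exact hCw u h
      have hle := hvmin u (hmemS u huw)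
      have hneq : u ≠ v := by
        intro hh; subst hh
        rcases huABC with h | h | h
        · exact hvA h
        · exact hvB h
        · exact hvC h
      omega
    · -- labels
      show (v ::ₘ (TA.labels + TB.labels + TC.labels)) = S
      rw [hLA, hLB, hLC]
      apply Multiset.ext.mpr
      intro u
      rw [Multiset.count_cons, Multiset.count_add, Multiset.count_add]
      by_cases huv : u = v
      · subst huv
        have h1 : MA.count v = 0 := by have := hcntA v; omega
        have h2 : MB.count v = 0 := by have := hcntB v; omega
        have h3 : MC.count v = 0 := by have := hcntC v; omega
        rw [h1, h2, h3, Multiset.count_eq_one_of_mem hN hvS]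
        simp
      · have ht := htot u huv
        have c1 := hcntA u
        have c2 := hcntB u
        have c3 := hcntC u
        rw [if_neg huv]
        omega
    · -- the word
      show TTree.toList (.node v TA TB TC) = w
      rw [hwdef]
      simp only [TTree.toList]
      rw [hTA, hTB, hTC]


end SA

theorem stirling_vs_ternary_trees (n : ℕ) (x y z : ℚ) :
    ∑ᶠ σ ∈ {σ : List ℕ | IsStirling n σ},
        x ^ ascQ σ * y ^ platQ σ * z ^ desQ σ =
      ∑ᶠ T ∈ {T : TTree | IsTernaryIncreasing n T},
        x ^ T.exl * y ^ T.exm * z ^ T.exr := by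
  classical
  have hSnodup : (Multiset.map (· + 1) (Multiset.range n)).Nodup :=
    (Multiset.nodup_range n).map (fun a b h => by omega)
  have hS0 : (0:ℕ) ∉ Multiset.map (· + 1) (Multiset.range n) := by simp
  have hScount : ∀ m : ℕ, (Multiset.map (· + 1) (Multiset.range n)).count m
      = if 1 ≤ m ∧ m ≤ n then 1 else 0 := by
    intro m
    by_cases hm : 1 ≤ m ∧ m ≤ n
    · rw [if_pos hm]
      apply Multiset.count_eq_one_of_mem hSnodup
      rw [Multiset.mem_map]
      exact ⟨m - 1, by rw [Multiset.mem_range]; omega, by omega⟩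
    · rw [if_neg hm, Multiset.count_eq_zero]
      rw [Multiset.mem_map]
      rintro ⟨k, hk, hke⟩
      rw [Multiset.mem_range] at hk
      omega
  have hpos : ∀ u ∈ Multiset.map (· + 1) (Multiset.range n), 0 < u := by
    intro u hu
    rw [Multiset.mem_map] at hu
    obtain ⟨k, _, hk⟩ := hu
    omega
  have hbij : Set.BijOn SA.TTree.toList {T : TTree | IsTernaryIncreasing n T}
      {σ : List ℕ | IsStirling n σ} := by
    refine ⟨?_, ?_, ?_⟩
    · intro T hT
      obtain ⟨hI, hL⟩ := hT
      constructor
      · intro m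
        rw [SA.count_toList, hL, hScount]
        split_ifs <;> rfl
      · exact SA.midP_toList T hI (by rw [hL]; exact hSnodup)
    · intro T hT T' hT' h
      exact SA.toList_inj T T' hT.1 hT'.1 (by rw [hT.2]; exact hSnodup)
        (by rw [hT'.2]; exact hSnodup) h
    · intro σ hσ
      obtain ⟨hc, hm⟩ := hσ
      obtain ⟨T, hI, hL, hTL⟩ := SA.exists_tree σ.length σ le_rfl _ hSnodup hS0
        (fun m => by rw [hc m, hScount]; split_ifs <;> rfl) hm
      exact ⟨T, ⟨hI, hL⟩, hTL⟩
  refine (finsum_mem_eq_of_bijOn SA.TTree.toList hbij ?_).symm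
  intro T hT
  obtain ⟨hI, hL⟩ := hT
  obtain ⟨e1, e2, e3⟩ := SA.stats_toList T hI (fun u hu => hpos u (by rw [← hL]; exact hu))
  rw [e1, e2, e3]
end

section
/- The number of Stirling permutation codes of length n, i.e., sequences ((0,0),(a_1,b_1),...,(a_{n-1},b_{n-1})) with 1 ≤ a_i ≤ i, 1 ≤ b_i ≤ 3, and (a_i,b_i) ≠ (a_j,b_j) for all i < j, equals (2n-1)!!. -/
/-- A Stirling permutation code of length `n`: a sequence
`((0,0),(a_1,b_1),…,(a_{n-1},b_{n-1}))` with `1 ≤ a_i ≤ i`, `1 ≤ b_i ≤ 3`,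
and the pairs `(a_i,b_i)` pairwise distinct. -/
def IsSPCode (n : ℕ) (L : List (ℕ × ℕ)) : Prop :=
  L.length = n ∧
  L.getD 0 (0, 0) = (0, 0) ∧
  (∀ i : ℕ, 1 ≤ i → i ≤ n - 1 →
    1 ≤ (L.getD i (0, 0)).1 ∧ (L.getD i (0, 0)).1 ≤ i ∧
    1 ≤ (L.getD i (0, 0)).2 ∧ (L.getD i (0, 0)).2 ≤ 3) ∧
  L.tail.Nodup

namespace SPAux

def Fn (n : ℕ) : Finset (ℕ × ℕ) := Finset.Icc 1 n ×ˢ Finset.Icc 1 3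

lemma Fn_card (n : ℕ) : (Fn n).card = 3 * n := by
  simp [Fn, Nat.card_Icc]; ring

lemma tail_subset {n : ℕ} {M : List (ℕ × ℕ)} (h : IsSPCode n M) :
    ∀ x ∈ M.tail, x ∈ Fn n := by
  obtain ⟨hlen, -, hb, -⟩ := h
  intro x hx
  obtain ⟨j, hj, rfl⟩ := List.getElem_of_mem hx
  have hjl : j < n - 1 := by simpa [hlen] using hj
  have hj1 : j + 1 < M.length := by omega
  rw [List.getElem_tail, ← List.getD_eq_getElem M (0,0) hj1]
  obtain ⟨h1, h2, h3, h4⟩ := hb (j+1) (by omega) (by omega)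
  simp only [Fn, Finset.mem_product, Finset.mem_Icc]
  exact ⟨⟨h1, by omega⟩, h3, h4⟩

lemma spcode_succ_iff {n : ℕ} (hn : 1 ≤ n) (L : List (ℕ × ℕ)) :
    IsSPCode (n+1) L ↔ ∃ M p, IsSPCode n M ∧ p ∈ Fn n ∧ p ∉ M.tail ∧ L = M ++ [p] := by
  constructor
  · rintro ⟨hlen, h0, hb, hnd⟩
    have hne : L ≠ [] := by intro h; simp [h] at hlen
    refine ⟨L.dropLast, L.getLast hne, ?_, ?_, ?_, (List.dropLast_append_getLast hne).symm⟩
    · set M := L.dropLast with hM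
      set p := L.getLast hne with hp
      have hL : M ++ [p] = L := List.dropLast_append_getLast hne
      have hMl : M.length = n := by
        have := congrArg List.length hL
        simp at this; omega
      have hMne : M ≠ [] := by
        intro h; rw [h] at hMl; simp at hMl; omega
      have htail : L.tail = M.tail ++ [p] := by
        rw [← hL, List.tail_append_of_ne_nil hMne]
      refine ⟨hMl, ?_, ?_, ?_⟩
      · rw [← hL] at h0
        rwa [List.getD_append _ _ _ 0 (by omega)] at h0
      · intro i h1 h2
        have : L.getD i (0,0) = M.getD i (0,0) := by
          rw [← hL, List.getD_append _ _ _ i (by omega)]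
        rw [← this]
        obtain ⟨a1, a2, a3, a4⟩ := hb i h1 (by omega)
        exact ⟨a1, a2, a3, a4⟩
      · rw [htail] at hnd
        exact hnd.of_append_left
    · set M := L.dropLast with hM
      set p := L.getLast hne with hp
      have hL : M ++ [p] = L := List.dropLast_append_getLast hne
      have hMl : M.length = n := by
        have := congrArg List.length hL
        simp at this; omega
      have hpn : L.getD n (0,0) = p := by
        rw [← hL, List.getD_eq_getElem _ _ (by simp; omega),
          List.getElem_append_right (by omega)]
        simp [hMl]
      obtain ⟨a1, a2, a3, a4⟩ := hb n hn (by omega)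
      rw [hpn] at a1 a2 a3 a4
      simp only [Fn, Finset.mem_product, Finset.mem_Icc]
      exact ⟨⟨a1, a2⟩, a3, a4⟩
    · set M := L.dropLast with hM
      set p := L.getLast hne with hp
      have hL : M ++ [p] = L := List.dropLast_append_getLast hne
      have hMl : M.length = n := by
        have := congrArg List.length hL
        simp at this; omega
      have hMne : M ≠ [] := by
        intro h; rw [h] at hMl; simp at hMl; omega
      have htail : L.tail = M.tail ++ [p] := by
        rw [← hL, List.tail_append_of_ne_nil hMne]
      rw [htail] at hnd
      have := List.disjoint_of_nodup_append hnd
      intro hmem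
      exact this hmem (by simp)
  · rintro ⟨M, p, ⟨hMl, h0, hb, hnd⟩, hpF, hpt, rfl⟩
    have hMne : M ≠ [] := by
      intro h; rw [h] at hMl; simp at hMl; omega
    simp only [Fn, Finset.mem_product, Finset.mem_Icc] at hpF
    refine ⟨by simp [hMl], ?_, ?_, ?_⟩
    · rw [List.getD_append _ _ _ 0 (by omega)]; exact h0
    · intro i h1 h2
      rcases lt_or_eq_of_le (show i ≤ n by omega) with hlt | rfl
      · rw [List.getD_append _ _ _ i (by omega)]
        exact hb i h1 (by omega)
      · have : (M ++ [p]).getD i (0,0) = p := by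
          rw [List.getD_eq_getElem _ _ (by simp; omega),
            List.getElem_append_right (by omega)]
          simp [hMl]
        rw [this]
        exact ⟨hpF.1.1, hpF.1.2, hpF.2.1, hpF.2.2⟩
    · rw [List.tail_append_of_ne_nil hMne]
      rw [List.nodup_append]
      exact ⟨hnd, List.nodup_singleton p, fun a ha b hb hab => hpt (by
        rw [List.mem_singleton] at hb; rw [hab, hb] at ha; exact ha)⟩

lemma main (n : ℕ) (hn : 1 ≤ n) :
    {L : List (ℕ × ℕ) | IsSPCode n L}.Finite ∧
    {L : List (ℕ × ℕ) | IsSPCode n L}.ncard = Nat.doubleFactorial (2 * n - 1) := by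
  induction n with
  | zero => omega
  | succ m ih =>
    rcases Nat.lt_or_ge m 1 with hm | hm
    · interval_cases m
      have hset : {L : List (ℕ × ℕ) | IsSPCode 1 L} = {[((0:ℕ),(0:ℕ))]} := by
        ext L
        simp only [Set.mem_setOf_eq, Set.mem_singleton_iff]
        constructor
        · rintro ⟨hlen, h0, -, -⟩
          match L, hlen with
          | [x], _ => simpa using h0
        · rintro rfl
          exact ⟨rfl, rfl, fun i h1 h2 => by omega, List.nodup_nil⟩
      rw [hset]
      exact ⟨Set.finite_singleton _, by simp⟩
    · obtain ⟨hfin, hcard⟩ := ih hm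
      classical
      set S : Finset (List (ℕ × ℕ)) := hfin.toFinset with hS
      set T : Finset (List (ℕ × ℕ)) :=
        S.biUnion (fun M => ((Fn m).filter (fun p => p ∉ M.tail)).image (fun p => M ++ [p])) with hT
      have hset : {L : List (ℕ × ℕ) | IsSPCode (m+1) L} = ↑T := by
        ext L
        simp only [Set.mem_setOf_eq, spcode_succ_iff hm, hT, Finset.coe_biUnion,
          Set.mem_iUnion, Finset.mem_coe, Finset.mem_image, Finset.mem_filter,
          hS, Set.Finite.mem_toFinset, Set.mem_setOf_eq]
        constructor
        · rintro ⟨M, p, h1, h2, h3, rfl⟩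
          exact ⟨M, h1, p, ⟨h2, h3⟩, rfl⟩
        · rintro ⟨M, h1, p, ⟨h2, h3⟩, rfl⟩
          exact ⟨M, p, h1, h2, h3, rfl⟩
      have hTcard : T.card = Nat.doubleFactorial (2 * m - 1) * (2 * m + 1) := by
        rw [hT, Finset.card_biUnion]
        · have hterm : ∀ M ∈ S,
              (((Fn m).filter (fun p => p ∉ M.tail)).image (fun p => M ++ [p])).card
                = 2 * m + 1 := by
            intro M hM
            rw [hS, Set.Finite.mem_toFinset] at hM
            rw [Finset.card_image_of_injective _ (fun p q h => by
              simpa using List.append_cancel_left h)]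
            have hsd : (Fn m).filter (fun p => p ∉ M.tail) = Fn m \ M.tail.toFinset := by
              ext x
              simp [Finset.mem_sdiff, Finset.mem_filter]
            rw [hsd, Finset.card_sdiff_of_subset (fun x hx => tail_subset hM x (by simpa using hx))]
            have htl : M.tail.toFinset.card = m - 1 := by
              rw [List.toFinset_card_of_nodup hM.2.2.2]
              simp [hM.1]
            rw [htl, Fn_card]
            omega
          rw [Finset.sum_congr rfl hterm, Finset.sum_const, smul_eq_mul]
          congr 1
          rw [hS, ← hcard]
          exact (Set.ncard_eq_toFinset_card _ hfin).symm
        · intro M₁ h1 M₂ h2 hne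
          simp only [Finset.disjoint_left, Finset.mem_image, Finset.mem_filter]
          rintro x ⟨p, -, rfl⟩ ⟨q, -, hq⟩
          apply hne
          have := congrArg List.dropLast hq
          simpa [List.dropLast_concat] using this.symm
      refine ⟨hset ▸ T.finite_toSet, ?_⟩
      rw [hset, Set.ncard_coe_finset, hTcard]
      have h2 : 2 * (m + 1) - 1 = (2 * m - 1) + 2 := by omega
      rw [h2, Nat.doubleFactorial_add_two]
      have h3 : 2 * m - 1 + 2 = 2 * m + 1 := by omega
      rw [h3, Nat.mul_comm]

end SPAux

theorem spcode_count (n : ℕ) (hn : 1 ≤ n) :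
    Set.ncard {L : List (ℕ × ℕ) | IsSPCode n L} = Nat.doubleFactorial (2 * n - 1) :=
  (SPAux.main n hn).2
end
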